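/- arXiv:2603.03257 — 4 statements merged into one kernel-verified Lean document; each statement's English description precedes it below -/
import Mathlib

section
/- Let G=(V,E) be an infinite locally finite graph, let q ∈ [0,1] and ε ∈ (0,1), let S be a finite set of vertices, and let t be a positive integer. Let ω and ζ be independent percolation configurations with ω ~ P_q and ζ ~ P_ε. Let E be the event that the cluster of S in ω ∪ ζ is finite and that at least t edges e ∈ ∂C_S(ω ∪ ζ) satisfy e ↔^ω ∞ (i.e., an endpoint of e lies in an infinite cluster of ω). Then P(E) ≤ (1-ε)^t. -/
open MeasureTheory Set

noncomputable section

namespace Perco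

variable {V : Type*}

/-- The set of (potential) edges both of whose endpoints lie in `A`. -/
def edgesWithin (A : Set V) : Set (Sym2 V) := {e | ∀ v ∈ e, v ∈ A}

/-- The spanning subgraph of `G` consisting of those edges of `G` lying in `F`. -/
def openGraph (G : SimpleGraph V) (F : Set (Sym2 V)) : SimpleGraph V where
  Adj u v := G.Adj u v ∧ s(u, v) ∈ F
  symm := ⟨fun u v h => ⟨h.1.symm, by rw [Sym2.eq_swap]; exact h.2⟩⟩
  loopless := ⟨fun v h => G.loopless.irrefl v h.1⟩

/-- The union of the clusters of the vertices of `S` in the configuration whose set of open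
edges is `F`. -/
def cluster (G : SimpleGraph V) (F : Set (Sym2 V)) (S : Set V) : Set V :=
  {v | ∃ u ∈ S, (openGraph G F).Reachable u v}

/-- `L` and `R` are connected by a path of edges of `G` lying in `F`. -/
def ConnVia (G : SimpleGraph V) (F : Set (Sym2 V)) (L R : Set V) : Prop :=
  ∃ u ∈ L, ∃ v ∈ R, (openGraph G F).Reachable u v

/-- The edge boundary `∂S`: edges of `G` with exactly one endpoint in `S`. -/
def edgeBdry (G : SimpleGraph V) (S : Set V) : Set (Sym2 V) :=
  {e | ∃ u v, G.Adj u v ∧ e = s(u, v) ∧ u ∈ S ∧ v ∉ S}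

/-- The set of vertices at graph distance at most `r` from the set `A`. -/
def ball (G : SimpleGraph V) (A : Set V) (r : ℕ) : Set V :=
  {v | ∃ u ∈ A, G.Reachable u v ∧ G.dist u v ≤ r}

/-- The set of open edges of a configuration `ω` on an edge set `F`. -/
def openOf {F : Set (Sym2 V)} (ω : F → Bool) : Set (Sym2 V) :=
  {e | ∃ h : e ∈ F, ω ⟨e, h⟩ = true}

/-- `μ` is the Bernoulli(`p`) product (percolation) measure on `{0,1}^E`: it is a probability
measure giving every finite cylinder event its product probability. -/
def IsBernoulli {E : Type*} (p : ℝ) (μ : Measure (E → Bool)) : Prop :=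
  IsProbabilityMeasure μ ∧
    ∀ (J : Finset E) (σ : E → Bool),
      μ {ω | ∀ e ∈ J, ω e = σ e} =
        ∏ e ∈ J, if σ e = true then ENNReal.ofReal p else ENNReal.ofReal (1 - p)

/-- The isoperimetric function `Φ(n)`. -/
def phi (G : SimpleGraph V) (n : ℕ) : ℕ :=
  sInf {m | ∃ S : Finset V, n ≤ S.card ∧ (edgeBdry G ↑S).ncard = m}

/-- `Φ(W)`: the minimal size of `∂S` over finite `S ⊇ W`. -/
def phiSet (G : SimpleGraph V) (W : Set V) : ℕ :=
  sInf {m | ∃ S : Finset V, W ⊆ ↑S ∧ (edgeBdry G ↑S).ncard = m}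

/-- The critical probability `p_c` of `G` (with distinguished vertex `o`). -/
def pc (G : SimpleGraph V) (o : V) : ℝ :=
  sInf {p | p ∈ Icc (0 : ℝ) 1 ∧
    ∃ μ : Measure (↥G.edgeSet → Bool), IsBernoulli p μ ∧
      0 < μ {ω | (cluster G (openOf ω) {o}).Infinite}}

/-- `G` is (vertex-)transitive. -/
def IsTransitive (G : SimpleGraph V) : Prop := ∀ u v : V, ∃ φ : G ≃g G, φ u = v

/-- `G` is locally finite. -/
def LocFin (G : SimpleGraph V) : Prop := ∀ v : V, (G.neighborSet v).Finite

/-- `W` is a vertex cutset from `L` to `R`: after deleting `W`, no path from `L` to `R`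
remains. -/
def VertexCutset (G : SimpleGraph V) (W L R : Set V) : Prop :=
  ¬ ConnVia G (edgesWithin Wᶜ) (L \ W) (R \ W)

/-- The hypercubic lattice `ℤ^d`. -/
def latticeGraph (d : ℕ) : SimpleGraph (Fin d → ℤ) where
  Adj x y := ∑ i, |x i - y i| = 1
  symm := ⟨fun x y h => by simpa [abs_sub_comm] using h⟩
  loopless := ⟨fun x h => by simp at h⟩

/-- The diameter of a set of vertices, measured in the graph metric of `G`. -/
def setDiam (G : SimpleGraph V) (A : Set V) : ℕ :=
  sSup {k | ∃ u ∈ A, ∃ v ∈ A, G.dist u v = k}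

/-- The annulus `A_{k,r}` of vertices of `A` whose distance to `o` lies in `[k-r, k+r]`. -/
def annulus (G : SimpleGraph V) (A : Set V) (o : V) (k r : ℕ) : Set V :=
  {v | v ∈ A ∧ (k : ℤ) - (r : ℤ) ≤ (G.dist o v : ℤ) ∧ (G.dist o v : ℤ) ≤ (k : ℤ) + (r : ℤ)}

end Perco

open Perco
namespace SprinkleAux
variable {V : Type*} {G : SimpleGraph V}

lemma openGraph_le (G : SimpleGraph V) (F : Set (Sym2 V)) : openGraph G F ≤ G := fun _ _ h => h.1

lemma openGraph_mono {F F' : Set (Sym2 V)} (h : F ⊆ F') : openGraph G F ≤ openGraph G F' :=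
  fun _ _ hadj => ⟨hadj.1, h hadj.2⟩

lemma finite_walkball (hlf : LocFin G) (v : V) :
    ∀ n : ℕ, {u | ∃ w : G.Walk u v, w.length ≤ n}.Finite := by
  intro n
  induction n with
  | zero =>
    apply Set.Finite.subset (Set.finite_singleton v)
    rintro u ⟨w, hw⟩
    cases w with
    | nil => rfl
    | cons h w' => simp [SimpleGraph.Walk.length_cons] at hw
  | succ n ih =>
    apply Set.Finite.subset ((ih.biUnion (fun x _ => hlf x)).insert v)
    rintro u ⟨w, hw⟩
    cases w with
    | nil => exact Set.mem_insert _ _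
    | @cons _ x _ h w' =>
      refine Set.mem_insert_iff.2 (Or.inr ?_)
      refine Set.mem_biUnion (⟨w', ?_⟩ : x ∈ {u | ∃ w : G.Walk u v, w.length ≤ n}) ?_
      · simpa [SimpleGraph.Walk.length_cons] using hw
      · exact h.symm

lemma countable_reach (hlf : LocFin G) (v : V) : {u | G.Reachable v u}.Countable := by
  have hsub : {u | G.Reachable v u} ⊆ ⋃ n : ℕ, {u | ∃ w : G.Walk u v, w.length ≤ n} := by
    intro u hu
    obtain ⟨w⟩ := hu.symm
    exact Set.mem_iUnion.2 ⟨w.length, w, le_refl _⟩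
  exact Set.Countable.mono hsub
    (Set.countable_iUnion fun n => (finite_walkball hlf v n).countable)

lemma finite_edgesWithin {A : Set V} (hA : A.Finite) : (edgesWithin A).Finite := by
  have h : edgesWithin A ⊆ (fun p : V × V => s(p.1, p.2)) '' (A ×ˢ A) := by
    intro e he
    induction e using Sym2.ind with
    | _ a b => exact ⟨(a, b), ⟨he a (by simp), he b (by simp)⟩, rfl⟩
  exact ((hA.prod hA).image _).subset h

lemma countable_edgesWithin {A : Set V} (hA : A.Countable) : (edgesWithin A).Countable := by
  have h : edgesWithin A ⊆ (fun p : V × V => s(p.1, p.2)) '' (A ×ˢ A) := by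
    intro e he
    induction e using Sym2.ind with
    | _ a b => exact ⟨(a, b), ⟨he a (by simp), he b (by simp)⟩, rfl⟩
  exact ((hA.prod hA).image _).mono h

lemma finite_edgeBdry (hlf : LocFin G) {A : Set V} (hA : A.Finite) : (edgeBdry G A).Finite := by
  have h : edgeBdry G A ⊆ ⋃ u ∈ A, (fun w => s(u, w)) '' (G.neighborSet u) := by
    rintro e ⟨u, v, hadj, rfl, hu, hv⟩
    exact Set.mem_biUnion hu ⟨v, hadj, rfl⟩
  exact (hA.biUnion fun u _ => (hlf u).image _).subset h


section Meas

abbrev Cfg (G : SimpleGraph V) := ↥G.edgeSet → Bool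

lemma chain_reflTransGen {α : Type*} {r : α → α → Prop} :
    ∀ (l : List α) (a : α), List.Chain r a l → ∀ x ∈ l, Relation.ReflTransGen r a x := by
  intro l
  induction l with
  | nil => intro a _ x hx; simp at hx
  | cons b l ih =>
    intro a hc x hx
    simp only [List.Chain, List.isChain_cons_cons] at hc
    rcases List.mem_cons.1 hx with rfl | hx
    · exact Relation.ReflTransGen.single hc.1
    · exact Relation.ReflTransGen.head hc.1 (ih b hc.2 x hx)

lemma measurableSet_chain :
    ∀ (l : List V) (a : V),
      MeasurableSet {ω : Cfg G | List.Chain (fun x y => G.Adj x y ∧ s(x, y) ∈ openOf ω) a l} := by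
  intro l
  induction l with
  | nil =>
    intro a
    convert MeasurableSet.univ using 1
    ext ω; simp [List.Chain]
  | cons b l ih =>
    intro a
    have heq : {ω : Cfg G | List.Chain (fun x y => G.Adj x y ∧ s(x, y) ∈ openOf ω) a (b :: l)}
        = {ω : Cfg G | G.Adj a b ∧ s(a, b) ∈ openOf ω}
          ∩ {ω : Cfg G | List.Chain (fun x y => G.Adj x y ∧ s(x, y) ∈ openOf ω) b l} := by
      ext ω; simp only [Set.mem_setOf_eq, Set.mem_inter_iff, List.Chain, List.isChain_cons_cons]
    rw [heq]
    refine MeasurableSet.inter ?_ (ih b)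
    by_cases hab : G.Adj a b
    · have h2 : {ω : Cfg G | G.Adj a b ∧ s(a, b) ∈ openOf ω}
          = (fun ω : Cfg G => ω ⟨s(a, b), hab⟩) ⁻¹' {true} := by
        ext ω
        simp only [Set.mem_setOf_eq, Set.mem_preimage, Set.mem_singleton_iff, openOf]
        constructor
        · rintro ⟨-, h, hh⟩; exact hh
        · intro h; exact ⟨hab, hab, h⟩
      rw [h2]
      exact (measurable_pi_apply _) (by trivial)
    · have h2 : {ω : Cfg G | G.Adj a b ∧ s(a, b) ∈ openOf ω} = (∅ : Set (Cfg G)) := by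
        ext ω; simp [hab]
      rw [h2]; exact MeasurableSet.empty

lemma adj_openGraph_iff {F : Set (Sym2 V)} {a b : V} :
    (openGraph G F).Adj a b ↔ G.Adj a b ∧ s(a, b) ∈ F := Iff.rfl

lemma measurableSet_reachable (hlf : LocFin G) (v u : V) :
    MeasurableSet {ω : Cfg G | (openGraph G (openOf ω)).Reachable v u} := by
  classical
  set Rv : Set V := {x | G.Reachable v x} with hRv
  have hRvc : Rv.Countable := countable_reach hlf v
  haveI : Countable ↥Rv := hRvc.to_subtype
  have key : {ω : Cfg G | (openGraph G (openOf ω)).Reachable v u}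
      = ⋃ (l : List ↥Rv) (_ : (v :: l.map Subtype.val).getLast? = some u),
          {ω : Cfg G | List.Chain (fun x y => G.Adj x y ∧ s(x, y) ∈ openOf ω) v
            (l.map Subtype.val)} := by
    ext ω
    simp only [Set.mem_setOf_eq, Set.mem_iUnion]
    constructor
    · intro hreach
      have h1 : Relation.ReflTransGen (openGraph G (openOf ω)).Adj v u :=
        (SimpleGraph.reachable_iff_reflTransGen _ _).1 hreach
      obtain ⟨l, hc, hlast⟩ := List.exists_isChain_cons_of_relationReflTransGen h1
      have hmem : ∀ x ∈ l, x ∈ Rv := by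
        intro x hx
        have := chain_reflTransGen l v hc x hx
        have : (openGraph G (openOf ω)).Reachable v x :=
          (SimpleGraph.reachable_iff_reflTransGen _ _).2 this
        exact this.mono (openGraph_le G _)
      have hmap : (l.attach.map fun x => (⟨x.1, hmem x.1 x.2⟩ : ↥Rv)).map Subtype.val = l := by
        simp [List.map_map, Function.comp]
      refine ⟨l.attach.map (fun x => (⟨x.1, hmem x.1 x.2⟩ : ↥Rv)), ?_, ?_⟩
      · rw [hmap, List.getLast?_eq_getLast (l := v :: l) (by simp), hlast]
      · rw [hmap]
        exact hc
    · rintro ⟨l, hlast, hc⟩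
      refine (SimpleGraph.reachable_iff_reflTransGen _ _).2 ?_
      have hlast' : (v :: l.map Subtype.val).getLast (by simp) = u := by
        have := List.getLast?_eq_getLast (l := v :: l.map Subtype.val) (by simp)
        rw [this] at hlast
        exact Option.some_injective _ hlast
      exact List.relationReflTransGen_of_exists_isChain_cons _ hc hlast'
  rw [key]
  exact MeasurableSet.iUnion fun l => MeasurableSet.iUnion fun _ => measurableSet_chain (l.map Subtype.val) v

lemma cluster_singleton_subset (ω : Cfg G) (v : V) :
    cluster G (openOf ω) {v} ⊆ {x | G.Reachable v x} := by
  rintro x ⟨w, hw, hr⟩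
  rcases hw with rfl
  exact hr.mono (openGraph_le G _)

lemma measurableSet_infinite_cluster (hlf : LocFin G) (v : V) :
    MeasurableSet {ω : Cfg G | (cluster G (openOf ω) {v}).Infinite} := by
  classical
  set Rv : Set V := {x | G.Reachable v x} with hRv
  have hRvc : Rv.Countable := countable_reach hlf v
  haveI : Countable ↥Rv := hRvc.to_subtype
  have key : {ω : Cfg G | (cluster G (openOf ω) {v}).Infinite}
      = ⋂ (K : Finset ↥Rv), ⋃ (u : ↥Rv) (_ : u ∉ K),
          {ω : Cfg G | (openGraph G (openOf ω)).Reachable v u.1} := by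
    ext ω
    simp only [Set.mem_setOf_eq, Set.mem_iInter, Set.mem_iUnion]
    constructor
    · intro hinf K
      have hK : (Subtype.val '' (K : Set ↥Rv)).Finite :=
        (K.finite_toSet.image _)
      obtain ⟨x, hx, hnx⟩ := (hinf.diff hK).nonempty
      have hxR : x ∈ Rv := cluster_singleton_subset ω v hx
      refine ⟨⟨x, hxR⟩, ?_, ?_⟩
      · intro hmem
        exact hnx ⟨⟨x, hxR⟩, hmem, rfl⟩
      · obtain ⟨w, hw, hr⟩ := hx
        rcases hw with rfl
        exact hr
    · intro h
      intro hfin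
      have hpre : {x : ↥Rv | x.1 ∈ cluster G (openOf ω) {v}}.Finite :=
        hfin.preimage (Set.injOn_of_injective Subtype.val_injective)
      obtain ⟨u, hu, hr⟩ := h hpre.toFinset
      exact hu (hpre.mem_toFinset.2 ⟨v, rfl, hr⟩)
  rw [key]
  exact MeasurableSet.iInter fun K => MeasurableSet.iUnion fun u =>
    MeasurableSet.iUnion fun _ => measurableSet_reachable hlf v u.1

end Meas


section Events
variable (G : SimpleGraph V)

/-- Edges of `G` with both endpoints in `A`. -/
def insE (A : Finset V) : Set (Sym2 V) := {e | e ∈ G.edgeSet ∧ ∀ v ∈ e, v ∈ (A : Set V)}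

lemma finite_insE (A : Finset V) : (insE G A).Finite :=
  (finite_edgesWithin A.finite_toSet).subset (fun _ he => he.2)

lemma edgeBdry_subset_edgeSet (A : Set V) : edgeBdry G A ⊆ G.edgeSet := by
  rintro e ⟨u, v, hadj, rfl, -, -⟩
  exact hadj

lemma insE_disj_bdry {A : Finset V} {e : Sym2 V} (h1 : e ∈ insE G A)
    (h2 : e ∈ edgeBdry G (↑A : Set V)) : False := by
  obtain ⟨u, v, hadj, rfl, hu, hv⟩ := h2
  exact hv (h1.2 v (by simp))

def TouchInf (ω : Cfg G) (e : Sym2 V) : Prop := ∃ v ∈ e, (cluster G (openOf ω) {v}).Infinite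

open Classical in
noncomputable def sgm (τ : Finset (Sym2 V)) : Cfg G :=
  fun e => if (e : Sym2 V) ∈ τ then true else false

def Pev (A : Finset V) (F s : Finset (Sym2 V)) : Set (Cfg G) :=
  {ω | (∀ e : ↥G.edgeSet, ↑e ∈ insE G A → (ω e = true ↔ (e : Sym2 V) ∈ s))
    ∧ (∀ e : ↥G.edgeSet, ↑e ∈ edgeBdry G (↑A : Set V) → ω e = false)
    ∧ (∀ e ∈ edgeBdry G (↑A : Set V), (TouchInf G ω e ↔ e ∈ F))
    ∧ (∀ v ∈ A, ¬ (cluster G (openOf ω) {v}).Infinite)}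

def Q0 (A : Finset V) (T τ : Finset (Sym2 V)) : Set (Cfg G) :=
  {ζ | ∀ e : ↥G.edgeSet, ↑e ∈ insE G A ∪ edgeBdry G (↑A : Set V) → (e : Sym2 V) ∉ T →
    ζ e = sgm G τ e}

def Qf (A : Finset V) (T τ : Finset (Sym2 V)) : Set (Cfg G) :=
  Q0 G A T τ ∩ {ζ | ∀ e : ↥G.edgeSet, (e : Sym2 V) ∈ T → ζ e = false}

/-- The finite set of coordinates corresponding to edges inside `A` or on its boundary. -/
noncomputable def Jfin (hlf : LocFin G) (A : Finset V) : Finset ↥G.edgeSet :=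
  (((finite_insE G A).union (finite_edgeBdry hlf A.finite_toSet)).preimage
    (Set.injOn_of_injective Subtype.val_injective)).toFinset

lemma mem_Jfin (hlf : LocFin G) (A : Finset V) (e : ↥G.edgeSet) :
    e ∈ Jfin G hlf A ↔ (↑e ∈ insE G A ∪ edgeBdry G (↑A : Set V)) := by
  simp [Jfin, Set.Finite.mem_toFinset]

noncomputable def Tfin (T : Finset (Sym2 V)) : Finset ↥G.edgeSet :=
  ((T.finite_toSet.preimage
    (Set.injOn_of_injective (Subtype.val_injective : Function.Injective
      (Subtype.val : ↥G.edgeSet → Sym2 V))))).toFinset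

lemma mem_Tfin (T : Finset (Sym2 V)) (e : ↥G.edgeSet) :
    e ∈ Tfin G T ↔ (e : Sym2 V) ∈ T := by
  simp [Tfin, Set.Finite.mem_toFinset]

lemma card_Tfin {T : Finset (Sym2 V)} (hT : ↑T ⊆ G.edgeSet) : (Tfin G T).card = T.card := by
  classical
  refine Finset.card_bij (fun e _ => (e : Sym2 V)) ?_ ?_ ?_
  · intro e he; exact (mem_Tfin G T e).1 he
  · intro e₁ h₁ e₂ h₂ h; exact Subtype.val_injective h
  · intro e he
    exact ⟨⟨e, hT he⟩, (mem_Tfin G T _).2 he, rfl⟩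

lemma Qf_eq_cyl (hlf : LocFin G) {A : Finset V} {T τ : Finset (Sym2 V)}
    (hT : ↑T ⊆ edgeBdry G (↑A : Set V)) (hτ : ↑τ ⊆ insE G A) :
    Qf G A T τ = {ζ : Cfg G | ∀ e ∈ Jfin G hlf A, ζ e = sgm G τ e} := by
  classical
  ext ζ
  simp only [Qf, Q0, Set.mem_inter_iff, Set.mem_setOf_eq, mem_Jfin]
  constructor
  · rintro ⟨h0, hcl⟩ e he
    by_cases hmT : (e : Sym2 V) ∈ T
    · rw [hcl e hmT]
      have : (e : Sym2 V) ∉ τ := fun hmem =>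
        insE_disj_bdry G (hτ hmem) (hT hmT)
      simp [sgm, this]
    · exact h0 e he hmT
  · intro h
    constructor
    · intro e he hmT; exact h e he
    · intro e heT
      rw [h e (Or.inr (hT heT))]
      have : (e : Sym2 V) ∉ τ := fun hmem =>
        insE_disj_bdry G (hτ hmem) (hT heT)
      simp [sgm, this]

open scoped Classical in
lemma Q0_eq_cyl (hlf : LocFin G) {A : Finset V} (T τ : Finset (Sym2 V)) :
    Q0 G A T τ = {ζ : Cfg G | ∀ e ∈ Jfin G hlf A \ Tfin G T, ζ e = sgm G τ e} := by
  classical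
  ext ζ
  simp only [Q0, Set.mem_setOf_eq, Finset.mem_sdiff, mem_Jfin, mem_Tfin]
  constructor
  · rintro h e ⟨he, hT⟩; exact h e he hT
  · intro h e he hT; exact h e ⟨he, hT⟩

end Events


section MeasEvents
variable (G : SimpleGraph V)

lemma measurableSet_forall_mem {α : Type*} {s : Set α} (hs : s.Finite)
    (p : α → Set (Cfg G)) (hp : ∀ a ∈ s, MeasurableSet (p a)) :
    MeasurableSet {ω : Cfg G | ∀ a ∈ s, ω ∈ p a} := by
  haveI := hs.to_subtype
  have heq : {ω : Cfg G | ∀ a ∈ s, ω ∈ p a} = ⋂ (x : ↥s), p x.1 := by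
    ext ω; simp [Set.mem_iInter, Subtype.forall]
  rw [heq]
  exact MeasurableSet.iInter fun x => hp x.1 x.2

lemma measurableSet_eval (e : ↥G.edgeSet) (b : Bool) :
    MeasurableSet {ω : Cfg G | ω e = b} := by
  have heq : {ω : Cfg G | ω e = b} = (fun ω : Cfg G => ω e) ⁻¹' {b} := rfl
  rw [heq]
  exact (measurable_pi_apply e) (by trivial : MeasurableSet ({b} : Set Bool))

lemma measurableSet_touchInf (hlf : LocFin G) (e : Sym2 V) :
    MeasurableSet {ω : Cfg G | TouchInf G ω e} := by
  induction e using Sym2.ind with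
  | _ a b =>
    have heq : {ω : Cfg G | TouchInf G ω s(a, b)}
        = {ω : Cfg G | (cluster G (openOf ω) {a}).Infinite}
          ∪ {ω : Cfg G | (cluster G (openOf ω) {b}).Infinite} := by
      ext ω
      simp only [TouchInf, Set.mem_setOf_eq, Set.mem_union, Sym2.mem_iff]
      constructor
      · rintro ⟨v, (rfl | rfl), hv⟩
        · exact Or.inl hv
        · exact Or.inr hv
      · rintro (h | h)
        · exact ⟨a, Or.inl rfl, h⟩
        · exact ⟨b, Or.inr rfl, h⟩
    rw [heq]
    exact (measurableSet_infinite_cluster hlf a).union (measurableSet_infinite_cluster hlf b)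

lemma measurableSet_Pev (hlf : LocFin G) (A : Finset V) (F s : Finset (Sym2 V)) :
    MeasurableSet (Pev G A F s) := by
  classical
  have h1 : MeasurableSet {ω : Cfg G | ∀ e : ↥G.edgeSet, ↑e ∈ insE G A →
      (ω e = true ↔ (e : Sym2 V) ∈ s)} := by
    have heq : {ω : Cfg G | ∀ e : ↥G.edgeSet, ↑e ∈ insE G A → (ω e = true ↔ (e : Sym2 V) ∈ s)}
        = {ω : Cfg G | ∀ e ∈ (Subtype.val ⁻¹' insE G A : Set ↥G.edgeSet),
            ω ∈ {ω' : Cfg G | ω' e = sgm G s e}} := by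
      ext ω
      refine forall_congr' fun e => imp_congr_right fun _ => ?_
      by_cases h : (e : Sym2 V) ∈ s <;> simp [sgm, h]
    rw [heq]
    exact measurableSet_forall_mem G
      ((finite_insE G A).preimage (Set.injOn_of_injective Subtype.val_injective))
      _ (fun e _ => measurableSet_eval G e _)
  have h2 : MeasurableSet {ω : Cfg G | ∀ e : ↥G.edgeSet,
      ↑e ∈ edgeBdry G (↑A : Set V) → ω e = false} := by
    have heq : {ω : Cfg G | ∀ e : ↥G.edgeSet, ↑e ∈ edgeBdry G (↑A : Set V) → ω e = false}
        = {ω : Cfg G | ∀ e ∈ (Subtype.val ⁻¹' edgeBdry G (↑A : Set V) : Set ↥G.edgeSet),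
            ω ∈ {ω' : Cfg G | ω' e = false}} := rfl
    rw [heq]
    exact measurableSet_forall_mem G
      ((finite_edgeBdry hlf A.finite_toSet).preimage
        (Set.injOn_of_injective Subtype.val_injective))
      _ (fun e _ => measurableSet_eval G e _)
  have h3 : MeasurableSet {ω : Cfg G |
      ∀ e ∈ edgeBdry G (↑A : Set V), (TouchInf G ω e ↔ e ∈ F)} := by
    refine measurableSet_forall_mem G (finite_edgeBdry hlf A.finite_toSet)
      (fun e => {ω : Cfg G | TouchInf G ω e ↔ e ∈ F}) (fun e _ => ?_)
    show MeasurableSet {ω : Cfg G | TouchInf G ω e ↔ e ∈ F}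
    by_cases heF : e ∈ F
    · have : {ω : Cfg G | TouchInf G ω e ↔ e ∈ F} = {ω : Cfg G | TouchInf G ω e} := by
        ext ω; simp [heF]
      rw [this]; exact measurableSet_touchInf G hlf e
    · have : {ω : Cfg G | TouchInf G ω e ↔ e ∈ F} = {ω : Cfg G | TouchInf G ω e}ᶜ := by
        ext ω; simp [heF]
      rw [this]; exact (measurableSet_touchInf G hlf e).compl
  have h4 : MeasurableSet {ω : Cfg G | ∀ v ∈ A, ¬ (cluster G (openOf ω) {v}).Infinite} := by
    have heq : {ω : Cfg G | ∀ v ∈ A, ¬ (cluster G (openOf ω) {v}).Infinite}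
        = {ω : Cfg G | ∀ v ∈ (↑A : Set V),
            ω ∈ {ω' : Cfg G | (cluster G (openOf ω') {v}).Infinite}ᶜ} := rfl
    rw [heq]
    exact measurableSet_forall_mem G A.finite_toSet _
      (fun v _ => (measurableSet_infinite_cluster hlf v).compl)
  exact (h1.inter (h2.inter (h3.inter h4)))

open scoped Classical in
lemma measurableSet_Q0 (hlf : LocFin G) (A : Finset V) (T τ : Finset (Sym2 V)) :
    MeasurableSet (Q0 G A T τ) := by
  rw [Q0_eq_cyl G hlf T τ]
  have heq : {ζ : Cfg G | ∀ e ∈ Jfin G hlf A \ Tfin G T, ζ e = sgm G τ e}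
      = {ζ : Cfg G | ∀ e ∈ (↑(Jfin G hlf A \ Tfin G T) : Set ↥G.edgeSet),
          ζ ∈ {ζ' : Cfg G | ζ' e = sgm G τ e}} := rfl
  rw [heq]
  exact measurableSet_forall_mem G (Finset.finite_toSet _) _
    (fun e _ => measurableSet_eval G e _)

open scoped Classical in
lemma meas_Qf_eq {ε : ℝ} {ν : Measure (Cfg G)} (hν : IsBernoulli ε ν) (hlf : LocFin G)
    {A : Finset V} {T τ : Finset (Sym2 V)}
    (hT : ↑T ⊆ edgeBdry G (↑A : Set V)) (hτ : ↑τ ⊆ insE G A) :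
    ν (Qf G A T τ) = ν (Q0 G A T τ) * (ENNReal.ofReal (1 - ε)) ^ T.card := by
  rw [Qf_eq_cyl G hlf hT hτ, Q0_eq_cyl G hlf T τ, hν.2, hν.2]
  have hsub : Tfin G T ⊆ Jfin G hlf A := fun e he =>
    (mem_Jfin G hlf A e).2 (Or.inr (hT ((mem_Tfin G T e).1 he)))
  conv_lhs => rw [← Finset.sdiff_union_of_subset hsub, Finset.prod_union Finset.sdiff_disjoint]
  congr 1
  have hfac : ∀ e ∈ Tfin G T,
      (if sgm G τ e = true then ENNReal.ofReal ε else ENNReal.ofReal (1 - ε))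
        = ENNReal.ofReal (1 - ε) := by
    intro e he
    have hmT : (e : Sym2 V) ∈ T := (mem_Tfin G T e).1 he
    have : (e : Sym2 V) ∉ τ := fun hmem => insE_disj_bdry G (hτ hmem) (hT hmT)
    simp [sgm, this]
  rw [Finset.prod_congr rfl hfac, Finset.prod_const,
    card_Tfin G (fun e he => edgeBdry_subset_edgeSet G _ (hT he))]

end MeasEvents


section Core
variable (G : SimpleGraph V)

open scoped Classical in
noncomputable def pick (t : ℕ) (F : Finset (Sym2 V)) : Finset (Sym2 V) :=
  if h : t ≤ F.card then (Finset.exists_subset_card_eq h).choose else ∅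

lemma pick_subset (t : ℕ) (F : Finset (Sym2 V)) : pick t F ⊆ F := by
  classical
  rw [pick]
  split
  · next h => exact (Finset.exists_subset_card_eq h).choose_spec.1
  · exact Finset.empty_subset _

lemma pick_card {t : ℕ} {F : Finset (Sym2 V)} (h : t ≤ F.card) : (pick t F).card = t := by
  classical
  rw [pick, dif_pos h]
  exact (Finset.exists_subset_card_eq h).choose_spec.2

/-- The index type for the decomposition: `(A, F, s, τ)`. -/
abbrev Idx (V : Type*) := Finset V × Finset (Sym2 V) × Finset (Sym2 V) × Finset (Sym2 V)

/-- Valid indices. -/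
def Valid (S : Finset V) (t : ℕ) : Set (Idx V) :=
  {i | S ⊆ i.1
    ∧ ↑i.2.1 ⊆ edgeBdry G (↑i.1 : Set V)
    ∧ t ≤ i.2.1.card
    ∧ ↑i.2.2.1 ⊆ insE G i.1
    ∧ ↑i.2.2.2 ⊆ insE G i.1
    ∧ (↑i.1 : Set V) ⊆ cluster G (↑i.2.2.1 ∪ ↑i.2.2.2) (↑S : Set V)
    ∧ (↑i.1 : Set V) ⊆ {v | ∃ u ∈ (↑S : Set V), G.Reachable u v}}

lemma reach_closed {S : Finset V} {u v : V}
    (hu : u ∈ {v | ∃ u ∈ (↑S : Set V), G.Reachable u v}) (h : G.Adj u v) :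
    v ∈ {v | ∃ u ∈ (↑S : Set V), G.Reachable u v} := by
  obtain ⟨w, hw, hr⟩ := hu
  exact ⟨w, hw, hr.trans h.reachable⟩

lemma valid_countable (hlf : LocFin G) (S : Finset V) (t : ℕ) :
    (Valid G S t).Countable := by
  classical
  set R : Set V := {v | ∃ u ∈ (↑S : Set V), G.Reachable u v} with hRdef
  have hR : R.Countable := by
    have : R = ⋃ u ∈ (↑S : Set V), {v | G.Reachable u v} := by
      ext v; simp [hRdef]
    rw [this]
    exact Set.Countable.biUnion S.countable_toSet (fun u _ => countable_reach hlf u)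
  have hER : (edgesWithin R).Countable := countable_edgesWithin hR
  have hSA : {A : Finset V | ↑A ⊆ R}.Countable := by
    have heq : {A : Finset V | ↑A ⊆ R}
        = (fun A : Finset V => (↑A : Set V)) ⁻¹' {s : Set V | s.Finite ∧ s ⊆ R} := by
      ext A; simp [Finset.finite_toSet]
    rw [heq]
    exact (Set.countable_setOf_finite_subset hR).preimage Finset.coe_injective
  have hSE : {F : Finset (Sym2 V) | ↑F ⊆ edgesWithin R}.Countable := by
    have heq : {F : Finset (Sym2 V) | ↑F ⊆ edgesWithin R}
        = (fun F : Finset (Sym2 V) => (↑F : Set (Sym2 V))) ⁻¹'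
            {s : Set (Sym2 V) | s.Finite ∧ s ⊆ edgesWithin R} := by
      ext F; simp [Finset.finite_toSet]
    rw [heq]
    exact (Set.countable_setOf_finite_subset hER).preimage Finset.coe_injective
  have hsub : Valid G S t ⊆ {A : Finset V | ↑A ⊆ R} ×ˢ
      ({F : Finset (Sym2 V) | ↑F ⊆ edgesWithin R} ×ˢ
        ({F : Finset (Sym2 V) | ↑F ⊆ edgesWithin R} ×ˢ
          {F : Finset (Sym2 V) | ↑F ⊆ edgesWithin R})) := by
    rintro ⟨A, F, s, τ⟩ ⟨-, hF, -, hs, hτ, -, hAR⟩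
    have hinsR : insE G A ⊆ edgesWithin R := by
      intro e he
      intro v hv
      exact hAR (he.2 v hv)
    refine ⟨hAR, ?_, fun e he => hinsR (hs he), fun e he => hinsR (hτ he)⟩
    intro e he
    obtain ⟨u, v, hadj, rfl, hu, hv⟩ := hF he
    intro x hx
    rcases Sym2.mem_iff.1 hx with rfl | rfl
    · exact hAR hu
    · exact reach_closed G (hAR hu) hadj
  exact (hSA.prod (hSE.prod (hSE.prod hSE))).mono hsub

lemma exists_crossing {H : SimpleGraph V} {B : Set V} :
    ∀ {u x : V}, H.Walk u x → u ∈ B → x ∉ B → ∃ a b, H.Adj a b ∧ a ∈ B ∧ b ∉ B := by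
  intro u x w
  induction w with
  | nil => intro hu hx; exact absurd hu hx
  | @cons u c x h w ih =>
    intro hu hx
    by_cases hc : c ∈ B
    · exact ih hc hx
    · exact ⟨u, c, h, hu, hc⟩

lemma mem_openOf (ω : Cfg G) (e : ↥G.edgeSet) : ((e : Sym2 V) ∈ openOf ω) ↔ ω e = true := by
  constructor
  · rintro ⟨h, hh⟩
    rwa [Subtype.coe_eta] at hh
  · intro h
    exact ⟨e.2, by rwa [Subtype.coe_eta]⟩

/-- Core disjointness step: if `(ω, ζ)` lies in the events of two valid indices `i, j`, then
`j.A ⊆ i.A`. -/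
lemma not_overlap (S : Finset V) (t : ℕ) {i j : Idx V}
    (hi : i ∈ Valid G S t) (hj : j ∈ Valid G S t) {ω ζ : Cfg G}
    (hPi : ω ∈ Pev G i.1 i.2.1 i.2.2.1) (hQi : ζ ∈ Q0 G i.1 (pick t i.2.1) i.2.2.2)
    (hPj : ω ∈ Pev G j.1 j.2.1 j.2.2.1) (hQj : ζ ∈ Q0 G j.1 (pick t j.2.1) j.2.2.2)
    {x : V} (hxj : x ∈ j.1) (hxi : x ∉ i.1) : False := by
  obtain ⟨hiS, hiF, hiFc, his, hiτ, hiIn, hiR⟩ := hi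
  obtain ⟨hjS, hjF, hjFc, hjs, hjτ, hjIn, hjR⟩ := hj
  -- a path from S to x inside j.1, all of whose edges lie in s_j ∪ τ_j
  obtain ⟨u, hu, hr⟩ := hjIn hxj
  obtain ⟨w⟩ := hr
  have huA : u ∈ (↑i.1 : Set V) := hiS hu
  obtain ⟨a, b, hab, haB, hbB⟩ :=
    exists_crossing (B := (↑i.1 : Set V)) w huA (by simpa using hxi)
  obtain ⟨hGab, hmem⟩ := hab
  -- the crossing edge
  have hein : s(a, b) ∈ insE G j.1 := by
    rcases (Set.mem_union _ _ _).1 hmem with h | h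
    · exact hjs h
    · exact hjτ h
  have heE : s(a, b) ∈ G.edgeSet := hein.1
  let ee : ↥G.edgeSet := ⟨s(a, b), heE⟩
  have hbd : (ee : Sym2 V) ∈ edgeBdry G (↑i.1 : Set V) := ⟨a, b, hGab, rfl, haB, hbB⟩
  -- ζ is open on the crossing edge
  have hζtrue : ζ ee = true := by
    rcases (Set.mem_union _ _ _).1 hmem with h | h
    · -- edge in s_j : then ω-open, contradicting that it is ω-closed on ∂(i.1)
      exact absurd (hPi.2.1 ee hbd) (by rw [(hPj.1 ee hein).2 h]; simp)
    · -- edge in τ_j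
      have hnT : (ee : Sym2 V) ∉ pick t j.2.1 := fun hc =>
        insE_disj_bdry G hein (hjF (pick_subset t j.2.1 hc))
      have := hQj ee (Or.inl hein) hnT
      rw [this]
      simp [sgm, Finset.mem_coe.1 h]
      exact Finset.mem_coe.1 h
  -- hence the crossing edge must be in the picked set of i
  have heT : (ee : Sym2 V) ∈ pick t i.2.1 := by
    by_contra hnT
    have := hQi ee (Or.inr hbd) hnT
    have hτi : (ee : Sym2 V) ∉ i.2.2.2 := fun hc => insE_disj_bdry G (hiτ hc) hbd
    rw [hζtrue] at this
    simp [sgm, hτi] at this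
  -- so it touches an infinite ω-cluster, contradiction
  have hF : (ee : Sym2 V) ∈ i.2.1 := pick_subset t i.2.1 heT
  have htouch : TouchInf G ω (ee : Sym2 V) := (hPi.2.2.1 _ hbd).2 hF
  obtain ⟨v, hv, hinf⟩ := htouch
  rcases Sym2.mem_iff.1 hv with rfl | rfl
  · exact hPi.2.2.2 v haB hinf
  · have hbj : v ∈ (↑j.1 : Set V) := hein.2 v (by simp)
    exact hPj.2.2.2 v hbj hinf

lemma index_eq (S : Finset V) (t : ℕ) {i j : Idx V}
    (hi : i ∈ Valid G S t) (hj : j ∈ Valid G S t) {ω ζ : Cfg G}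
    (hPi : ω ∈ Pev G i.1 i.2.1 i.2.2.1) (hQi : ζ ∈ Q0 G i.1 (pick t i.2.1) i.2.2.2)
    (hPj : ω ∈ Pev G j.1 j.2.1 j.2.2.1) (hQj : ζ ∈ Q0 G j.1 (pick t j.2.1) j.2.2.2) :
    i = j := by
  classical
  have hA : i.1 = j.1 := by
    by_contra hA
    have hx : ∃ x, (x ∈ i.1 ∧ x ∉ j.1) ∨ (x ∈ j.1 ∧ x ∉ i.1) := by
      by_contra hc
      push_neg at hc
      apply hA
      ext x
      exact ⟨fun h => (hc x).1 h, fun h => (hc x).2 h⟩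
    obtain ⟨x, hcase⟩ := hx
    rcases hcase with ⟨h1, h2⟩ | ⟨h1, h2⟩
    · exact not_overlap G S t hj hi hPj hQj hPi hQi h1 h2
    · exact not_overlap G S t hi hj hPi hQi hPj hQj h1 h2
  obtain ⟨Ai, Fi, si, τi⟩ := i
  obtain ⟨Aj, Fj, sj, τj⟩ := j
  simp only at hA
  subst hA
  obtain ⟨hiS, hiF, hiFc, his, hiτ, hiIn, hiR⟩ := hi
  obtain ⟨hjS, hjF, hjFc, hjs, hjτ, hjIn, hjR⟩ := hj
  simp only at hiF hiFc his hiτ hjF hjFc hjs hjτ hPi hQi hPj hQj ⊢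
  have hF : Fi = Fj := by
    ext e
    constructor
    · intro he
      exact (hPj.2.2.1 e (hiF he)).1 ((hPi.2.2.1 e (hiF he)).2 he)
    · intro he
      exact (hPi.2.2.1 e (hjF he)).1 ((hPj.2.2.1 e (hjF he)).2 he)
  have hs : si = sj := by
    ext e
    constructor
    · intro he
      have h1 : e ∈ G.edgeSet := (his he).1
      exact (hPj.1 ⟨e, h1⟩ (his he)).1 ((hPi.1 ⟨e, h1⟩ (his he)).2 he)
    · intro he
      have h1 : e ∈ G.edgeSet := (hjs he).1
      exact (hPi.1 ⟨e, h1⟩ (hjs he)).1 ((hPj.1 ⟨e, h1⟩ (hjs he)).2 he)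
  have hτ : τi = τj := by
    have key : ∀ e (h1 : e ∈ G.edgeSet), e ∈ insE G Ai →
        (ζ ⟨e, h1⟩ = sgm G τi ⟨e, h1⟩ ∧ ζ ⟨e, h1⟩ = sgm G τj ⟨e, h1⟩) := by
      intro e h1 hins
      have hnTi : e ∉ pick t Fi := fun hc =>
        insE_disj_bdry G hins (hiF (pick_subset t Fi hc))
      have hnTj : e ∉ pick t Fj := fun hc =>
        insE_disj_bdry G hins (hjF (pick_subset t Fj hc))
      exact ⟨hQi ⟨e, h1⟩ (Or.inl hins) hnTi, hQj ⟨e, h1⟩ (Or.inl hins) hnTj⟩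
    ext e
    constructor
    · intro he
      have h1 : e ∈ G.edgeSet := (hiτ he).1
      obtain ⟨k1, k2⟩ := key e h1 (hiτ he)
      rw [k1] at k2
      by_contra hne
      simp [sgm, he, hne] at k2
    · intro he
      have h1 : e ∈ G.edgeSet := (hjτ he).1
      obtain ⟨k1, k2⟩ := key e h1 (hjτ he)
      rw [k2] at k1
      by_contra hne
      simp [sgm, he, hne] at k1
  rw [hF, hs, hτ]

end Core


section Cover
variable (G : SimpleGraph V)

lemma cluster_closed {F : Set (Sym2 V)} {S : Set V} {a b : V}
    (ha : a ∈ cluster G F S) (h : (openGraph G F).Adj a b) : b ∈ cluster G F S := by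
  obtain ⟨u, hu, hr⟩ := ha
  exact ⟨u, hu, hr.trans h.reachable⟩

lemma cover (hlf : LocFin G) (S : Finset V) (t : ℕ) {ω ζ : Cfg G}
    (hfin : (cluster G (openOf ω ∪ openOf ζ) (↑S : Set V)).Finite)
    (hcard : t ≤ {e ∈ edgeBdry G (cluster G (openOf ω ∪ openOf ζ) (↑S : Set V)) |
        ∃ v, v ∈ e ∧ (cluster G (openOf ω) {v}).Infinite}.ncard) :
    ∃ i ∈ Valid G S t,
      ω ∈ Pev G i.1 i.2.1 i.2.2.1 ∧ ζ ∈ Qf G i.1 (pick t i.2.1) i.2.2.2 := by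
  classical
  set C := cluster G (openOf ω ∪ openOf ζ) (↑S : Set V) with hCdef
  have hbdclosed : ∀ (e : ↥G.edgeSet), (e : Sym2 V) ∈ edgeBdry G C →
      ω e = false ∧ ζ e = false := by
    intro e he
    obtain ⟨u, v, hadj, heq, hu, hv⟩ := he
    constructor
    · by_contra hcon
      have h' : ω e = true := by simpa using hcon
      have hop : s(u, v) ∈ openOf ω := by rw [← heq]; exact (mem_openOf G ω e).2 h'
      exact hv (cluster_closed G hu ⟨hadj, Or.inl hop⟩)
    · by_contra hcon
      have h' : ζ e = true := by simpa using hcon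
      have hop : s(u, v) ∈ openOf ζ := by rw [← heq]; exact (mem_openOf G ζ e).2 h'
      exact hv (cluster_closed G hu ⟨hadj, Or.inr hop⟩)
  set A : Finset V := hfin.toFinset with hAdef
  have hAco : (↑A : Set V) = C := hfin.coe_toFinset
  have hFSfin : {e ∈ edgeBdry G C | ∃ v, v ∈ e ∧ (cluster G (openOf ω) {v}).Infinite}.Finite :=
    (finite_edgeBdry hlf hfin).subset (Set.sep_subset _ _)
  set Ff : Finset (Sym2 V) := hFSfin.toFinset with hFfdef
  have hsfin : {e ∈ insE G A | e ∈ openOf ω}.Finite :=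
    (finite_insE G A).subset (Set.sep_subset _ _)
  set sf : Finset (Sym2 V) := hsfin.toFinset with hsfdef
  have hτfin : {e ∈ insE G A | e ∈ openOf ζ}.Finite :=
    (finite_insE G A).subset (Set.sep_subset _ _)
  set τf : Finset (Sym2 V) := hτfin.toFinset with hτfdef
  refine ⟨(A, Ff, sf, τf), ⟨?_, ?_, ?_, ?_, ?_, ?_, ?_⟩, ?_, ?_⟩
  · -- S ⊆ A
    intro v hv
    exact hfin.mem_toFinset.2 ⟨v, Finset.mem_coe.2 hv, SimpleGraph.Reachable.refl _⟩
  · -- F ⊆ ∂A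
    rw [hFSfin.coe_toFinset, hAco]
    exact Set.sep_subset _ _
  · -- t ≤ F.card
    rwa [Set.ncard_eq_toFinset_card _ hFSfin] at hcard
  · -- s ⊆ insE
    rw [hsfin.coe_toFinset]
    exact Set.sep_subset _ _
  · -- τ ⊆ insE
    rw [hτfin.coe_toFinset]
    exact Set.sep_subset _ _
  · -- internal connectivity
    rw [hsfin.coe_toFinset, hτfin.coe_toFinset, hAco]
    have key : ∀ (a x : V) (w : (openGraph G (openOf ω ∪ openOf ζ)).Walk a x), a ∈ C →
        (openGraph G ({e ∈ insE G A | e ∈ openOf ω} ∪ {e ∈ insE G A | e ∈ openOf ζ})).Reachable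
          a x := by
      intro a x w
      induction w with
      | nil => intro _; exact SimpleGraph.Reachable.refl _
      | @cons a c x h w ih =>
        intro ha
        have hc : c ∈ C := cluster_closed G ha h
        have hins : s(a, c) ∈ insE G A := by
          refine ⟨h.1, fun v hv => ?_⟩
          rcases Sym2.mem_iff.1 hv with rfl | rfl
          · rw [hAco]; exact ha
          · rw [hAco]; exact hc
        have hedge : s(a, c) ∈ {e ∈ insE G A | e ∈ openOf ω}
            ∪ {e ∈ insE G A | e ∈ openOf ζ} := by
          rcases h.2 with ho | ho
          · exact Or.inl ⟨hins, ho⟩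
          · exact Or.inr ⟨hins, ho⟩
        have hadj : (openGraph G ({e ∈ insE G A | e ∈ openOf ω}
            ∪ {e ∈ insE G A | e ∈ openOf ζ})).Adj a c := ⟨h.1, hedge⟩
        exact hadj.reachable.trans (ih hc)
    intro x hx
    obtain ⟨u, hu, hr⟩ := hx
    obtain ⟨w⟩ := hr
    exact ⟨u, hu, key u x w ⟨u, hu, SimpleGraph.Reachable.refl _⟩⟩
  · -- A ⊆ R
    rw [hAco]
    rintro x ⟨u, hu, hr⟩
    exact ⟨u, hu, hr.mono (openGraph_le G _)⟩
  · -- Pev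
    refine ⟨?_, ?_, ?_, ?_⟩
    · -- Pev (a)
      intro e he
      constructor
      · intro h
        exact hsfin.mem_toFinset.2 ⟨he, (mem_openOf G ω e).2 h⟩
      · intro hmem
        exact (mem_openOf G ω e).1 (hsfin.mem_toFinset.1 hmem).2
    · -- Pev (b)
      intro e he
      rw [hAco] at he
      exact (hbdclosed e he).1
    · -- Pev (c)
      intro e he
      rw [hAco] at he
      constructor
      · intro ht
        exact hFSfin.mem_toFinset.2 ⟨he, ht⟩
      · intro hm
        exact (hFSfin.mem_toFinset.1 hm).2
    · -- Pev (d)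
      intro v hv hinf
      have hvC : v ∈ C := hfin.mem_toFinset.1 hv
      refine (hfin.subset ?_).not_infinite hinf
      rintro y ⟨v', hv', hr⟩
      rcases hv' with rfl
      obtain ⟨u, hu, hr0⟩ := hvC
      exact ⟨u, hu, hr0.trans (hr.mono (openGraph_mono Set.subset_union_left))⟩
  · -- Qf
    constructor
    · -- Q0
      intro e he hnT
      rcases he with hins | hbd
      · by_cases hz : ζ e = true
        · have hmem : (e : Sym2 V) ∈ τf := hτfin.mem_toFinset.2 ⟨hins, (mem_openOf G ζ e).2 hz⟩
          rw [hz]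
          simp [sgm, hmem]
        · have hz' : ζ e = false := by simpa using hz
          have hmem : (e : Sym2 V) ∉ τf := by
            intro hmem
            exact hz ((mem_openOf G ζ e).1 (hτfin.mem_toFinset.1 hmem).2)
          rw [hz']
          simp [sgm, hmem]
      · rw [hAco] at hbd
        have h1 : ζ e = false := (hbdclosed e hbd).2
        have hmem : (e : Sym2 V) ∉ τf := by
          intro hmem
          exact insE_disj_bdry G (hτfin.mem_toFinset.1 hmem).1 (by rw [hAco]; exact hbd)
        rw [h1]
        simp [sgm, hmem]
    · -- closed on T
      intro e heT
      have hFm : (e : Sym2 V) ∈ Ff := pick_subset t Ff heT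
      have hbd : (e : Sym2 V) ∈ edgeBdry G C := (hFSfin.mem_toFinset.1 hFm).1
      exact (hbdclosed e hbd).2

end Cover

end SprinkleAux

open Perco in
/-- Sprinkling bound: for independent `ω ~ P_q` and `ζ ~ P_ε`, the probability
that the `(ω ∪ ζ)`-cluster of `S` is finite while at least `t` of its boundary edges touch an
infinite `ω`-cluster is at most `(1-ε)^t`. -/
theorem statement_4 {V : Type*} (G : SimpleGraph V) [Infinite V] (hlf : LocFin G)
    (q ε : ℝ) (hq : q ∈ Set.Icc (0 : ℝ) 1) (hε : ε ∈ Set.Ioo (0 : ℝ) 1)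
    (S : Finset V) (t : ℕ) (ht : 1 ≤ t)
    (μ ν : MeasureTheory.Measure (↥G.edgeSet → Bool))
    (hμ : IsBernoulli q μ) (hν : IsBernoulli ε ν) :
    μ.prod ν {ωζ | (cluster G (openOf ωζ.1 ∪ openOf ωζ.2) ↑S).Finite ∧
        t ≤ {e ∈ edgeBdry G (cluster G (openOf ωζ.1 ∪ openOf ωζ.2) ↑S) |
              ∃ v : V, v ∈ e ∧ (cluster G (openOf ωζ.1) {v}).Infinite}.ncard}
      ≤ ENNReal.ofReal ((1 - ε) ^ t) := by
  classical
  haveI : IsProbabilityMeasure μ := hμ.1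
  haveI : IsProbabilityMeasure ν := hν.1
  have h0ε : (0 : ℝ) ≤ 1 - ε := by linarith [hε.2]
  set c : ENNReal := ENNReal.ofReal (1 - ε) with hcdef
  have hcover : {ωζ : (↥G.edgeSet → Bool) × (↥G.edgeSet → Bool) |
        (cluster G (openOf ωζ.1 ∪ openOf ωζ.2) ↑S).Finite ∧
        t ≤ {e ∈ edgeBdry G (cluster G (openOf ωζ.1 ∪ openOf ωζ.2) ↑S) |
              ∃ v : V, v ∈ e ∧ (cluster G (openOf ωζ.1) {v}).Infinite}.ncard}
      ⊆ ⋃ i ∈ SprinkleAux.Valid G S t,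
          (SprinkleAux.Pev G i.1 i.2.1 i.2.2.1) ×ˢ
            (SprinkleAux.Qf G i.1 (SprinkleAux.pick t i.2.1) i.2.2.2) := by
    rintro ⟨ω, ζ⟩ ⟨h1, h2⟩
    obtain ⟨i, hiV, hP, hQ⟩ := SprinkleAux.cover G hlf S t h1 h2
    exact Set.mem_biUnion hiV (Set.mk_mem_prod hP hQ)
  refine le_trans (measure_mono hcover) ?_
  refine le_trans (measure_biUnion_le (μ.prod ν) (SprinkleAux.valid_countable G hlf S t) _) ?_
  have hterm : ∀ i : ↥(SprinkleAux.Valid G S t),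
      (μ.prod ν) ((SprinkleAux.Pev G (↑i : SprinkleAux.Idx V).1 (↑i : SprinkleAux.Idx V).2.1
          (↑i : SprinkleAux.Idx V).2.2.1) ×ˢ
        (SprinkleAux.Qf G (↑i : SprinkleAux.Idx V).1
          (SprinkleAux.pick t (↑i : SprinkleAux.Idx V).2.1) (↑i : SprinkleAux.Idx V).2.2.2))
      = (μ.prod ν) ((SprinkleAux.Pev G (↑i : SprinkleAux.Idx V).1 (↑i : SprinkleAux.Idx V).2.1
          (↑i : SprinkleAux.Idx V).2.2.1) ×ˢ
        (SprinkleAux.Q0 G (↑i : SprinkleAux.Idx V).1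
          (SprinkleAux.pick t (↑i : SprinkleAux.Idx V).2.1) (↑i : SprinkleAux.Idx V).2.2.2))
          * c ^ t := by
    rintro ⟨i, hi⟩
    have hT : ↑(SprinkleAux.pick t i.2.1) ⊆ edgeBdry G (↑i.1 : Set V) :=
      fun e he => hi.2.1 (SprinkleAux.pick_subset t i.2.1 he)
    have hτ : ↑i.2.2.2 ⊆ SprinkleAux.insE G i.1 := hi.2.2.2.2.1
    rw [Measure.prod_prod, Measure.prod_prod,
      SprinkleAux.meas_Qf_eq G hν hlf hT hτ, SprinkleAux.pick_card hi.2.2.1, mul_assoc]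
  refine le_trans (le_of_eq (tsum_congr hterm)) ?_
  rw [ENNReal.tsum_mul_right]
  have hdisj : (SprinkleAux.Valid G S t).PairwiseDisjoint
      (fun i : SprinkleAux.Idx V => (SprinkleAux.Pev G i.1 i.2.1 i.2.2.1) ×ˢ
        (SprinkleAux.Q0 G i.1 (SprinkleAux.pick t i.2.1) i.2.2.2)) := by
    intro i hi j hj hne
    refine Set.disjoint_left.2 ?_
    rintro ⟨ω, ζ⟩ ⟨hPi, hQi⟩ ⟨hPj, hQj⟩
    exact hne (SprinkleAux.index_eq G S t hi hj hPi hQi hPj hQj)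
  have hone : (∑' (i : ↥(SprinkleAux.Valid G S t)),
      (μ.prod ν) ((SprinkleAux.Pev G (↑i : SprinkleAux.Idx V).1 (↑i : SprinkleAux.Idx V).2.1
          (↑i : SprinkleAux.Idx V).2.2.1) ×ˢ
        (SprinkleAux.Q0 G (↑i : SprinkleAux.Idx V).1
          (SprinkleAux.pick t (↑i : SprinkleAux.Idx V).2.1)
          (↑i : SprinkleAux.Idx V).2.2.2))) ≤ 1 := by
    rw [← measure_biUnion (SprinkleAux.valid_countable G hlf S t) hdisj
      (fun i _ => (SprinkleAux.measurableSet_Pev G hlf _ _ _).prod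
        (SprinkleAux.measurableSet_Q0 G hlf _ _ _))]
    exact prob_le_one
  calc _ ≤ 1 * c ^ t := mul_le_mul_left hone _
    _ = ENNReal.ofReal ((1 - ε) ^ t) := by rw [one_mul, hcdef, ENNReal.ofReal_pow h0ε]
end
end

section
/- Let G=(V,E) be a locally finite graph, and let L and R be disjoint sets of vertices. Let r ≥ 1 be an integer and let A be a set of vertices such that B_r(A) (the set of vertices at distance at most r from A) is not a vertex cutset from L to R. Let p, δ ∈ [0,1] be such that for every vertex v, P_p(B_{r-1}(v) ↔ L ∪ R) ≥ 1-δ. Then there exists a vertex u such that the ball B := B_r(u) is disjoint from A and satisfies both P_p(B ↔^{V∖R} L) ≥ 1-√δ and P_p(B ↔^{V∖L} R) ≥ 1-√δ. -/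
open MeasureTheory Set

noncomputable section

namespace Perco

variable {V : Type*}

section Aux
set_option linter.unusedSectionVars false
open scoped FinsetFamily

/-- Finite union of "all edges of `K` open" events (abstract index type). -/
def upEvent {ι : Type*} (𝒦 : Finset (Finset ι)) : Set (ι → Bool) :=
  ⋃ K ∈ 𝒦, {ω | ∀ e ∈ K, ω e = true}

section Abstract
variable {ι : Type*} [DecidableEq ι] {p δ : ℝ}

/-- weight of a configuration (as subset `s` of `J`). -/
def wt (p : ℝ) (J s : Finset ι) : ℝ := ∏ e ∈ J, if e ∈ s then p else 1 - p

lemma wt_nonneg (hp : p ∈ Icc (0:ℝ) 1) (J s : Finset ι) : 0 ≤ wt p J s :=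
  Finset.prod_nonneg fun e _ => by
    by_cases h : e ∈ s <;> simp [wt, h, hp.1, hp.2, sub_nonneg]

lemma wt_mul_wt (J s t : Finset ι) :
    wt p J s * wt p J t = wt p J (s ∩ t) * wt p J (s ∪ t) := by
  unfold wt
  rw [← Finset.prod_mul_distrib, ← Finset.prod_mul_distrib]
  refine Finset.prod_congr rfl fun e _ => ?_
  by_cases hs : e ∈ s <;> by_cases ht : e ∈ t <;>
    simp [hs, ht, Finset.mem_inter, Finset.mem_union, mul_comm]

lemma wt_eq_of_subset {J s : Finset ι} (hs : s ⊆ J) :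
    wt p J s = (∏ _e ∈ s, p) * ∏ _e ∈ J \ s, (1 - p) := by
  unfold wt
  have hJ : J = s ∪ J \ s := (Finset.union_sdiff_of_subset hs).symm
  rw [show (∏ e ∈ J, if e ∈ s then p else 1 - p)
      = ∏ e ∈ s ∪ J \ s, (if e ∈ s then p else 1 - p) from by rw [← hJ],
    Finset.prod_union Finset.disjoint_sdiff]
  congr 1
  · exact Finset.prod_congr rfl fun e he => by simp [he]
  · exact Finset.prod_congr rfl fun e he => by simp [(Finset.mem_sdiff.1 he).2]

lemma wt_sum_powerset (J : Finset ι) : ∑ s ∈ J.powerset, wt p J s = 1 := by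
  have h := Finset.prod_add (fun _ : ι => p) (fun _ => 1 - p) J
  simp only [add_sub_cancel, Finset.prod_const_one] at h
  rw [eq_comm, h]
  refine Finset.sum_congr rfl fun s hs => ?_
  rw [wt_eq_of_subset (Finset.mem_powerset.1 hs)]


lemma harris_wt (hp : p ∈ Icc (0:ℝ) 1) {J : Finset ι} {𝒜 ℬ : Finset (Finset ι)}
    (h𝒜 : 𝒜 ⊆ J.powerset) (hℬ : ℬ ⊆ J.powerset)
    (hlow𝒜 : ∀ s ∈ 𝒜, ∀ t ⊆ s, t ∈ 𝒜) (hlowℬ : ∀ s ∈ ℬ, ∀ t ⊆ s, t ∈ ℬ) :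
    (∑ s ∈ 𝒜, wt p J s) * ∑ s ∈ ℬ, wt p J s ≤ ∑ s ∈ 𝒜 ∩ ℬ, wt p J s := by
  have h4 := Finset.four_functions_theorem J
    (f₁ := wt p J) (f₂ := wt p J) (f₃ := wt p J) (f₄ := wt p J)
    (fun s => wt_nonneg hp J s) (fun s => wt_nonneg hp J s)
    (fun s => wt_nonneg hp J s) (fun s => wt_nonneg hp J s)
    (fun s _ t _ => le_of_eq (wt_mul_wt J s t)) h𝒜 hℬ
  refine h4.trans ?_
  have h1 : ∑ s ∈ 𝒜 ⊼ ℬ, wt p J s ≤ ∑ s ∈ 𝒜 ∩ ℬ, wt p J s := by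
    refine Finset.sum_le_sum_of_subset_of_nonneg ?_ (fun s _ _ => wt_nonneg hp J s)
    intro c hc
    obtain ⟨a, ha, b, hb, rfl⟩ := Finset.mem_infs.1 hc
    exact Finset.mem_inter.2 ⟨hlow𝒜 a ha _ Finset.inter_subset_left,
      hlowℬ b hb _ Finset.inter_subset_right⟩
  have h2 : ∑ s ∈ 𝒜 ⊻ ℬ, wt p J s ≤ 1 := by
    rw [← wt_sum_powerset (p := p) J]
    refine Finset.sum_le_sum_of_subset_of_nonneg ?_ (fun s _ _ => wt_nonneg hp J s)
    intro c hc
    obtain ⟨a, ha, b, hb, rfl⟩ := Finset.mem_sups.1 hc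
    exact Finset.mem_powerset.2 (Finset.union_subset (Finset.mem_powerset.1 (h𝒜 ha))
      (Finset.mem_powerset.1 (hℬ hb)))
  calc (∑ s ∈ 𝒜 ⊼ ℬ, wt p J s) * ∑ s ∈ 𝒜 ⊻ ℬ, wt p J s
      ≤ (∑ s ∈ 𝒜 ∩ ℬ, wt p J s) * 1 := by
        refine mul_le_mul h1 h2 (Finset.sum_nonneg fun s _ => wt_nonneg hp J s)
          (Finset.sum_nonneg fun s _ => wt_nonneg hp J s)
    _ = ∑ s ∈ 𝒜 ∩ ℬ, wt p J s := mul_one _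

def trace (J : Finset ι) (ω : ι → Bool) : Finset ι := J.filter (fun e => ω e = true)

lemma trace_subset (J : Finset ι) (ω : ι → Bool) : trace J ω ⊆ J := Finset.filter_subset _ _

lemma measurableSet_cylinder (J : Finset ι) (σ : ι → Bool) :
    MeasurableSet {ω : ι → Bool | ∀ e ∈ J, ω e = σ e} := by
  have h : {ω : ι → Bool | ∀ e ∈ J, ω e = σ e}
      = ⋂ e ∈ (J : Set ι), (fun ω : ι → Bool => ω e) ⁻¹' {σ e} := by
    ext ω; simp
  rw [h]
  exact MeasurableSet.biInter J.countable_toSet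
    (fun e _ => measurable_pi_apply e (measurableSet_singleton (σ e)))

lemma trace_eq_iff {J s : Finset ι} (hs : s ⊆ J) (ω : ι → Bool) :
    trace J ω = s ↔ ∀ e ∈ J, ω e = (if e ∈ s then true else false) := by
  constructor
  · intro h e he
    by_cases hes : e ∈ s
    · rw [← h] at hes
      simp only [trace, Finset.mem_filter] at hes
      simp [hes.2, if_pos (h ▸ Finset.mem_filter.2 ⟨he, hes.2⟩ : e ∈ s)]
    · simp only [if_neg hes]
      rcases Bool.eq_false_or_eq_true (ω e) with h' | h'
      · exact absurd (h ▸ Finset.mem_filter.2 ⟨he, h'⟩) hes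
      · exact h'
  · intro h
    ext e
    simp only [trace, Finset.mem_filter]
    constructor
    · rintro ⟨heJ, het⟩
      by_contra hes
      simpa [hes, het] using h e heJ
    · intro hes
      exact ⟨hs hes, by simpa [hes] using h e (hs hes)⟩

lemma measurableSet_trace_event (J : Finset ι) (𝒮 : Finset (Finset ι)) :
    MeasurableSet {ω : ι → Bool | trace J ω ∈ 𝒮} := by
  have h : {ω : ι → Bool | trace J ω ∈ 𝒮}
      = ⋃ s ∈ ((𝒮 ∩ J.powerset : Finset (Finset ι)) : Set (Finset ι)), {ω | trace J ω = s} := by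
    ext ω
    simp only [mem_setOf_eq, mem_iUnion, Finset.mem_coe, Finset.mem_inter, exists_prop]
    constructor
    · intro h; exact ⟨trace J ω, ⟨h, Finset.mem_powerset.2 (trace_subset J ω)⟩, rfl⟩
    · rintro ⟨s, ⟨hs, -⟩, rfl⟩; exact hs
  rw [h]
  refine MeasurableSet.biUnion (Finset.countable_toSet _) (fun s hs => ?_)
  have hsJ : s ⊆ J := Finset.mem_powerset.1 (Finset.mem_inter.1 hs).2
  have : {ω : ι → Bool | trace J ω = s}
      = {ω : ι → Bool | ∀ e ∈ J, ω e = (if e ∈ s then true else false)} := by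
    ext ω; exact trace_eq_iff hsJ ω
  rw [this]
  exact measurableSet_cylinder _ _

lemma measure_trace_event (hp : p ∈ Icc (0:ℝ) 1) {μ : Measure (ι → Bool)}
    (hμ : IsBernoulli p μ) {J : Finset ι} {𝒮 : Finset (Finset ι)} (h𝒮 : 𝒮 ⊆ J.powerset) :
    μ {ω | trace J ω ∈ 𝒮} = ENNReal.ofReal (∑ s ∈ 𝒮, wt p J s) := by
  have hU : {ω : ι → Bool | trace J ω ∈ 𝒮} = ⋃ s ∈ 𝒮, {ω | trace J ω = s} := by
    ext ω; simp only [mem_setOf_eq, mem_iUnion, exists_prop]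
    exact ⟨fun h => ⟨trace J ω, h, rfl⟩, fun ⟨s, hs, h⟩ => h ▸ hs⟩
  have hcyl : ∀ s ∈ 𝒮, {ω : ι → Bool | trace J ω = s}
      = {ω : ι → Bool | ∀ e ∈ J, ω e = (if e ∈ s then true else false)} := by
    intro s hs; ext ω; exact trace_eq_iff (Finset.mem_powerset.1 (h𝒮 hs)) ω
  rw [hU, measure_biUnion_finset ?_ ?_]
  · rw [ENNReal.ofReal_sum_of_nonneg (fun s _ => wt_nonneg hp J s)]
    refine Finset.sum_congr rfl fun s hs => ?_
    rw [hcyl s hs, hμ.2 J (fun e => if e ∈ s then true else false), wt,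
      ENNReal.ofReal_prod_of_nonneg (fun e _ => by
        by_cases hes : e ∈ s <;> simp [hes, hp.1, hp.2, sub_nonneg])]
    refine Finset.prod_congr rfl fun e _ => ?_
    by_cases hes : e ∈ s <;> simp [hes]
  · intro s hs t ht hst
    simp only [Function.onFun, Set.disjoint_left]
    rintro ω (h1 : trace J ω = s) (h2 : trace J ω = t)
    exact hst (h1 ▸ h2 ▸ rfl)
  · intro s hs
    rw [hcyl s hs]; exact measurableSet_cylinder _ _

/-- The upper family of `𝒦` within the powerset of `J`. -/
def upFam (J : Finset ι) (𝒦 : Finset (Finset ι)) : Finset (Finset ι) :=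
  J.powerset.filter (fun s => ∃ K ∈ 𝒦, K ⊆ s)

lemma upEvent_eq_trace {J : Finset ι} {𝒦 : Finset (Finset ι)} (h : ∀ K ∈ 𝒦, K ⊆ J) :
    upEvent 𝒦 = {ω | trace J ω ∈ upFam J 𝒦} := by
  ext ω
  simp only [upEvent, mem_iUnion, mem_setOf_eq, upFam, Finset.mem_filter, exists_prop,
    Finset.mem_powerset]
  constructor
  · rintro ⟨K, hK, hopen⟩
    exact ⟨trace_subset J ω, K, hK, fun e he =>
      Finset.mem_filter.2 ⟨h K hK he, hopen e he⟩⟩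
  · rintro ⟨-, K, hK, hsub⟩
    exact ⟨K, hK, fun e he => (Finset.mem_filter.1 (hsub he)).2⟩

lemma compl_upEvent_eq_trace {J : Finset ι} {𝒦 : Finset (Finset ι)} (h : ∀ K ∈ 𝒦, K ⊆ J) :
    (upEvent 𝒦)ᶜ = {ω | trace J ω ∈ J.powerset \ upFam J 𝒦} := by
  rw [upEvent_eq_trace h]
  ext ω
  simp [Finset.mem_sdiff, trace_subset J ω, Finset.mem_powerset]

lemma measurableSet_upEvent (𝒦 : Finset (Finset ι)) : MeasurableSet (upEvent 𝒦) := by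
  rw [upEvent_eq_trace (J := 𝒦.sup id) (fun K hK => Finset.le_sup (f := id) hK)]
  exact measurableSet_trace_event _ _

/-- Harris inequality for complements of two finite increasing events. -/
lemma harris_upEvent (hp : p ∈ Icc (0:ℝ) 1) {μ : Measure (ι → Bool)}
    (hμ : IsBernoulli p μ) (𝒦 𝒧 : Finset (Finset ι)) :
    μ (upEvent 𝒦)ᶜ * μ (upEvent 𝒧)ᶜ ≤ μ ((upEvent 𝒦)ᶜ ∩ (upEvent 𝒧)ᶜ) := by
  set J : Finset ι := 𝒦.sup id ∪ 𝒧.sup id with hJ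
  have hK : ∀ K ∈ 𝒦, K ⊆ J := fun K hK =>
    (Finset.le_sup (f := id) hK).trans Finset.subset_union_left
  have hL : ∀ K ∈ 𝒧, K ⊆ J := fun K hK =>
    (Finset.le_sup (f := id) hK).trans Finset.subset_union_right
  set 𝒜 : Finset (Finset ι) := J.powerset \ upFam J 𝒦 with h𝒜
  set ℬ : Finset (Finset ι) := J.powerset \ upFam J 𝒧 with hℬ
  have hint : (upEvent 𝒦)ᶜ ∩ (upEvent 𝒧)ᶜ = {ω | trace J ω ∈ 𝒜 ∩ ℬ} := by
    rw [compl_upEvent_eq_trace hK, compl_upEvent_eq_trace hL]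
    ext ω; simp only [mem_inter_iff, mem_setOf_eq, h𝒜, hℬ, Finset.mem_inter,
      Finset.mem_sdiff, Finset.mem_powerset]
  have hlow : ∀ (𝒳 : Finset (Finset ι)), ∀ s ∈ J.powerset \ upFam J 𝒳, ∀ t ⊆ s,
      t ∈ J.powerset \ upFam J 𝒳 := by
    intro 𝒳 s hs t hts
    rw [Finset.mem_sdiff] at hs ⊢
    refine ⟨Finset.mem_powerset.2 (hts.trans (Finset.mem_powerset.1 hs.1)), fun ht => hs.2 ?_⟩
    simp only [upFam, Finset.mem_filter] at ht ⊢
    exact ⟨hs.1, ht.2.imp fun K hK => ⟨hK.1, hK.2.trans hts⟩⟩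
  rw [hint, compl_upEvent_eq_trace hK, compl_upEvent_eq_trace hL]
  rw [measure_trace_event hp hμ (𝒮 := 𝒜) Finset.sdiff_subset,
    measure_trace_event hp hμ (𝒮 := ℬ) Finset.sdiff_subset,
    measure_trace_event hp hμ (𝒮 := 𝒜 ∩ ℬ) ((Finset.inter_subset_left).trans Finset.sdiff_subset),
    ← ENNReal.ofReal_mul (Finset.sum_nonneg fun s _ => wt_nonneg hp J s)]
  exact ENNReal.ofReal_le_ofReal (harris_wt hp Finset.sdiff_subset Finset.sdiff_subset
    (hlow 𝒦) (hlow 𝒧))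

lemma measure_upEvent (hp : p ∈ Icc (0:ℝ) 1) {μ : Measure (ι → Bool)}
    (hμ : IsBernoulli p μ) (𝒦 : Finset (Finset ι)) :
    μ (upEvent 𝒦) = ENNReal.ofReal (∑ s ∈ upFam (𝒦.sup id) 𝒦, wt p (𝒦.sup id) s) := by
  rw [upEvent_eq_trace (J := 𝒦.sup id) (fun K hK => Finset.le_sup (f := id) hK)]
  exact measure_trace_event hp hμ (Finset.filter_subset _ _)


lemma upEvent_mono {𝒦 𝒧 : Finset (Finset ι)} (h : 𝒦 ⊆ 𝒧) : upEvent 𝒦 ⊆ upEvent 𝒧 := by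
  refine Set.iUnion_mono fun K => ?_
  by_cases hK : K ∈ 𝒦
  · simp [hK, h hK]
  · simp [hK]

lemma measure_iUnion_upEvent (hp : p ∈ Icc (0:ℝ) 1) {μ : Measure (ι → Bool)}
    (hμ : IsBernoulli p μ) (𝒦 : ℕ → Finset (Finset ι)) (hmono : Monotone 𝒦) :
    μ (⋃ n, upEvent (𝒦 n))
      = ⨆ n, ENNReal.ofReal (∑ s ∈ upFam ((𝒦 n).sup id) (𝒦 n), wt p ((𝒦 n).sup id) s) := by
  rw [Monotone.measure_iUnion (fun n m h => upEvent_mono (hmono h))]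
  exact iSup_congr fun n => measure_upEvent hp hμ (𝒦 n)

lemma bern_dichotomy (hp : p ∈ Icc (0:ℝ) 1) (hδ : δ ∈ Icc (0:ℝ) 1)
    (𝒦 𝒧 : ℕ → Finset (Finset ι)) (hK : Monotone 𝒦) (hL : Monotone 𝒧)
    (hcover : ∀ μ : Measure (ι → Bool), IsBernoulli p μ →
      ENNReal.ofReal (1 - δ) ≤ μ ((⋃ n, upEvent (𝒦 n)) ∪ ⋃ n, upEvent (𝒧 n))) :
    (∀ μ : Measure (ι → Bool), IsBernoulli p μ →
      ENNReal.ofReal (1 - Real.sqrt δ) ≤ μ (⋃ n, upEvent (𝒦 n))) ∨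
    (∀ μ : Measure (ι → Bool), IsBernoulli p μ →
      ENNReal.ofReal (1 - Real.sqrt δ) ≤ μ (⋃ n, upEvent (𝒧 n))) := by
  by_cases hex : ∃ μ : Measure (ι → Bool), IsBernoulli p μ
  swap
  · exact Or.inl fun μ hμ => absurd ⟨μ, hμ⟩ hex
  obtain ⟨μ₀, hμ₀⟩ := hex
  haveI := hμ₀.1
  set A := ⋃ n, upEvent (𝒦 n) with hA
  set B := ⋃ n, upEvent (𝒧 n) with hB
  have hAmeas : MeasurableSet A := MeasurableSet.iUnion fun n => measurableSet_upEvent _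
  have hBmeas : MeasurableSet B := MeasurableSet.iUnion fun n => measurableSet_upEvent _
  -- Harris at the limit
  have hsub : ∀ n, Aᶜ ⊆ (upEvent (𝒦 n))ᶜ := fun n =>
    compl_subset_compl.2 (subset_iUnion (fun n => upEvent (𝒦 n)) n)
  have hsub' : ∀ n, Bᶜ ⊆ (upEvent (𝒧 n))ᶜ := fun n =>
    compl_subset_compl.2 (subset_iUnion (fun n => upEvent (𝒧 n)) n)
  have hanti : ∀ n m, n ≤ m → (upEvent (𝒦 m))ᶜ ∩ (upEvent (𝒧 m))ᶜ ⊆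
      (upEvent (𝒦 n))ᶜ ∩ (upEvent (𝒧 n))ᶜ := fun n m h =>
    inter_subset_inter (compl_subset_compl.2 (upEvent_mono (hK h)))
      (compl_subset_compl.2 (upEvent_mono (hL h)))
  have hharris : μ₀ Aᶜ * μ₀ Bᶜ ≤ μ₀ (Aᶜ ∩ Bᶜ) := by
    have hinter : Aᶜ ∩ Bᶜ = ⋂ n, ((upEvent (𝒦 n))ᶜ ∩ (upEvent (𝒧 n))ᶜ) := by
      rw [hA, hB, compl_iUnion, compl_iUnion]
      ext ω
      simp only [mem_inter_iff, mem_iInter]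
      exact ⟨fun h n => ⟨h.1 n, h.2 n⟩, fun h => ⟨fun n => (h n).1, fun n => (h n).2⟩⟩
    have heq : μ₀ (⋂ n, ((upEvent (𝒦 n))ᶜ ∩ (upEvent (𝒧 n))ᶜ))
        = ⨅ n, μ₀ ((upEvent (𝒦 n))ᶜ ∩ (upEvent (𝒧 n))ᶜ) := by
      refine Directed.measure_iInter (fun n => (((measurableSet_upEvent _).compl).inter
        ((measurableSet_upEvent _).compl)).nullMeasurableSet) ?_ ⟨0, measure_ne_top _ _⟩
      intro n m
      exact ⟨max n m, hanti n _ (le_max_left n m), hanti m _ (le_max_right n m)⟩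
    rw [hinter, heq]
    refine le_iInf fun n => ?_
    calc μ₀ Aᶜ * μ₀ Bᶜ ≤ μ₀ (upEvent (𝒦 n))ᶜ * μ₀ (upEvent (𝒧 n))ᶜ :=
          mul_le_mul' (measure_mono (hsub n)) (measure_mono (hsub' n))
      _ ≤ _ := harris_upEvent hp hμ₀ (𝒦 n) (𝒧 n)
  -- the complement of the union is small
  have hδ1 : (0:ℝ) ≤ 1 - δ := by linarith [hδ.2]
  have hδbound : μ₀ (Aᶜ ∩ Bᶜ) ≤ ENNReal.ofReal δ := by
    rw [← compl_union, prob_compl_eq_one_sub (hAmeas.union hBmeas)]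
    calc (1 : ENNReal) - μ₀ (A ∪ B) ≤ 1 - ENNReal.ofReal (1 - δ) :=
          tsub_le_tsub_left (hcover μ₀ hμ₀) 1
      _ = ENNReal.ofReal δ := by
          rw [← ENNReal.ofReal_one, ← ENNReal.ofReal_sub _ hδ1]
          norm_num
  -- square root trick
  have key : μ₀ Aᶜ ≤ ENNReal.ofReal (Real.sqrt δ) ∨ μ₀ Bᶜ ≤ ENNReal.ofReal (Real.sqrt δ) := by
    by_contra hcon
    push_neg at hcon
    have hBne0 : μ₀ Bᶜ ≠ 0 := fun h0 => by simp [h0] at hcon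
    have hBtop : μ₀ Bᶜ ≠ ⊤ := measure_ne_top _ _
    have hlt : ENNReal.ofReal δ < μ₀ Aᶜ * μ₀ Bᶜ := by
      have h1 : ENNReal.ofReal δ = ENNReal.ofReal (Real.sqrt δ) * ENNReal.ofReal (Real.sqrt δ) := by
        rw [← ENNReal.ofReal_mul (Real.sqrt_nonneg δ), Real.mul_self_sqrt hδ.1]
      rw [h1]
      calc ENNReal.ofReal (Real.sqrt δ) * ENNReal.ofReal (Real.sqrt δ)
          ≤ ENNReal.ofReal (Real.sqrt δ) * μ₀ Bᶜ := mul_le_mul_right hcon.2.le _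
        _ < μ₀ Aᶜ * μ₀ Bᶜ := by
            rw [mul_comm _ (μ₀ Bᶜ), mul_comm (μ₀ Aᶜ)]
            exact ENNReal.mul_lt_mul_right hBne0 hBtop hcon.1
    exact absurd (hharris.trans hδbound) (not_le.2 hlt)
  -- convert a small complement into a large event
  have conv : ∀ C : Set (ι → Bool), MeasurableSet C →
      μ₀ Cᶜ ≤ ENNReal.ofReal (Real.sqrt δ) → ENNReal.ofReal (1 - Real.sqrt δ) ≤ μ₀ C := by
    intro C hC h
    calc ENNReal.ofReal (1 - Real.sqrt δ)
        = 1 - ENNReal.ofReal (Real.sqrt δ) := by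
          rw [← ENNReal.ofReal_one, ← ENNReal.ofReal_sub _ (Real.sqrt_nonneg δ)]
      _ ≤ 1 - μ₀ Cᶜ := tsub_le_tsub_left h 1
      _ = μ₀ C := by rw [← prob_compl_eq_one_sub hC.compl, compl_compl]
  -- transfer to every Bernoulli measure via determinacy
  rcases key with h | h
  · refine Or.inl fun μ hμ => ?_
    rw [show μ A = μ₀ A from (measure_iUnion_upEvent hp hμ 𝒦 hK).trans
      (measure_iUnion_upEvent hp hμ₀ 𝒦 hK).symm]
    exact conv A hAmeas h
  · refine Or.inr fun μ hμ => ?_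
    rw [show μ B = μ₀ B from (measure_iUnion_upEvent hp hμ 𝒧 hL).trans
      (measure_iUnion_upEvent hp hμ₀ 𝒧 hL).symm]
    exact conv B hBmeas h

end Abstract

section Graph
variable {G : SimpleGraph V} {F F' : Set (Sym2 V)}

/- ### basic graph lemmas -/

lemma dist_triangle' {u v w : V} (h1 : G.Reachable u v) (h2 : G.Reachable v w) :
    G.dist u w ≤ G.dist u v + G.dist v w := by
  obtain ⟨q, hq⟩ := h1.exists_walk_length_eq_dist
  obtain ⟨q', hq'⟩ := h2.exists_walk_length_eq_dist
  calc G.dist u w ≤ (q.append q').length := SimpleGraph.dist_le _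
    _ = G.dist u v + G.dist v w := by rw [SimpleGraph.Walk.length_append, hq, hq']

lemma mem_ball_single {u x : V} {s : ℕ} :
    x ∈ ball G {u} s ↔ G.Reachable u x ∧ G.dist u x ≤ s := by
  simp [ball]

lemma self_mem_ball (u : V) (s : ℕ) : u ∈ ball G {u} s :=
  mem_ball_single.2 ⟨SimpleGraph.Reachable.refl u, by simp [SimpleGraph.dist_self]⟩

lemma ball_mono_radius {A : Set V} {s t : ℕ} (h : s ≤ t) : ball G A s ⊆ ball G A t := by
  rintro x ⟨u, hu, hr, hd⟩
  exact ⟨u, hu, hr, hd.trans h⟩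

lemma ball_single_subset_of_adj {u u' : V} {s : ℕ} (h : G.Adj u u') :
    ball G {u} s ⊆ ball G {u'} (s + 1) := by
  intro x hx
  rw [mem_ball_single] at hx ⊢
  have hr : G.Reachable u' u := SimpleGraph.Adj.reachable h.symm
  refine ⟨hr.trans hx.1, ?_⟩
  calc G.dist u' x ≤ G.dist u' u + G.dist u x := dist_triangle' hr hx.1
    _ ≤ 1 + s := add_le_add (SimpleGraph.dist_le h.symm.toWalk) hx.2
    _ = s + 1 := by omega

lemma exists_penultimate {u x : V} (q : G.Walk u x) (hq : q.length ≠ 0) :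
    ∃ w, G.Adj w x ∧ G.Reachable u w ∧ G.dist u w + 1 ≤ q.length := by
  induction q with
  | nil => simp at hq
  | @cons a b c h q' ih =>
    by_cases h0 : q'.length = 0
    · have hbc : b = c := SimpleGraph.Walk.eq_of_length_eq_zero h0
      subst hbc
      exact ⟨a, h, SimpleGraph.Reachable.refl a, by simp [SimpleGraph.dist_self]⟩
    · obtain ⟨w, hadj, hreach, hd⟩ := ih h0
      refine ⟨w, hadj, (h.reachable).trans hreach, ?_⟩
      have h1 : G.dist a w ≤ G.dist a b + G.dist b w := dist_triangle' h.reachable hreach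
      have h2 : G.dist a b ≤ 1 := SimpleGraph.dist_le h.toWalk
      simp only [SimpleGraph.Walk.length_cons]
      omega

lemma ball_finite (hlf : LocFin G) {A : Set V} (hA : A.Finite) (r : ℕ) :
    (ball G A r).Finite := by
  induction r with
  | zero =>
    refine hA.subset ?_
    rintro x ⟨u, hu, hr, hd⟩
    exact (hr.dist_eq_zero_iff.1 (Nat.le_zero.1 hd)) ▸ hu
  | succ n ih =>
    have hsub : ball G A (n + 1) ⊆ ball G A n ∪ ⋃ w ∈ ball G A n, G.neighborSet w := by
      rintro x ⟨u, hu, hr, hd⟩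
      by_cases hn : G.dist u x ≤ n
      · exact Or.inl ⟨u, hu, hr, hn⟩
      obtain ⟨q, hq⟩ := hr.exists_walk_length_eq_dist
      have hq0 : q.length ≠ 0 := by omega
      obtain ⟨w, hadj, hreach, hdw⟩ := exists_penultimate q hq0
      exact Or.inr (mem_iUnion₂.2 ⟨w, ⟨u, hu, hreach, by omega⟩, hadj⟩)
    exact (ih.union (Set.Finite.biUnion ih fun w _ => hlf w)).subset hsub

lemma openGraph_le : openGraph G F ≤ G := fun _ _ h => h.1

lemma openGraph_mono (h : F ⊆ F') : openGraph G F ≤ openGraph G F' :=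
  fun _ _ ha => ⟨ha.1, h ha.2⟩

lemma openGraph_edgeSet {e : Sym2 V} :
    e ∈ (openGraph G F).edgeSet ↔ e ∈ G.edgeSet ∧ e ∈ F := by
  induction e using Sym2.ind with
  | _ x y => exact Iff.rfl

lemma connVia_mono_F {S T : Set V} (h : F ⊆ F') (hc : ConnVia G F S T) : ConnVia G F' S T := by
  obtain ⟨u, hu, v, hv, hr⟩ := hc
  exact ⟨u, hu, v, hv, hr.mono (openGraph_mono h)⟩

lemma connVia_mono_left {S S' T : Set V} (h : S ⊆ S') (hc : ConnVia G F S T) :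
    ConnVia G F S' T := by
  obtain ⟨u, hu, v, hv, hr⟩ := hc
  exact ⟨u, h hu, v, hv, hr⟩

lemma connVia_of_mem {S T : Set V} {x : V} (hS : x ∈ S) (hT : x ∈ T) : ConnVia G F S T :=
  ⟨x, hS, x, hT, SimpleGraph.Reachable.refl x⟩

lemma connVia_iff_exists_walk {S T : Set V} :
    ConnVia G F S T ↔ ∃ a ∈ S, ∃ b ∈ T, ∃ w : G.Walk a b, ∀ e ∈ w.edges, e ∈ F := by
  constructor
  · rintro ⟨a, ha, b, hb, ⟨p⟩⟩
    have hed : ∀ e ∈ p.edges, e ∈ G.edgeSet := fun e he =>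
      (openGraph_edgeSet.1 (p.edges_subset_edgeSet he)).1
    refine ⟨a, ha, b, hb, p.transfer G hed, fun e he => ?_⟩
    rw [SimpleGraph.Walk.edges_transfer] at he
    exact (openGraph_edgeSet.1 (p.edges_subset_edgeSet he)).2
  · rintro ⟨a, ha, b, hb, w, hw⟩
    refine ⟨a, ha, b, hb, ⟨w.transfer (openGraph G F) fun e he => ?_⟩⟩
    exact openGraph_edgeSet.2 ⟨w.edges_subset_edgeSet he, hw e he⟩

lemma walk_split {L R : Set V} (hLR : Disjoint L R) {a b : V}
    (w : (openGraph G F).Walk a b) (hb : b ∈ L ∪ R) :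
    (a ∈ Rᶜ ∧ ∃ y ∈ L, (openGraph G (F ∩ edgesWithin Rᶜ)).Reachable a y) ∨
    (a ∈ Lᶜ ∧ ∃ y ∈ R, (openGraph G (F ∩ edgesWithin Lᶜ)).Reachable a y) := by
  induction w with
  | nil =>
    rename_i u
    rcases hb with hb | hb
    · exact Or.inl ⟨disjoint_left.1 hLR hb, u, hb, SimpleGraph.Reachable.refl u⟩
    · exact Or.inr ⟨disjoint_right.1 hLR hb, u, hb, SimpleGraph.Reachable.refl u⟩
  | @cons a b' c h q ih =>
    by_cases haL : a ∈ L
    · exact Or.inl ⟨disjoint_left.1 hLR haL, a, haL, SimpleGraph.Reachable.refl a⟩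
    by_cases haR : a ∈ R
    · exact Or.inr ⟨disjoint_right.1 hLR haR, a, haR, SimpleGraph.Reachable.refl a⟩
    rcases ih hb with ⟨hbR, y, hy, hr⟩ | ⟨hbL, y, hy, hr⟩
    · refine Or.inl ⟨haR, y, hy, SimpleGraph.Reachable.trans (SimpleGraph.Adj.reachable
        (show G.Adj a b' ∧ s(a, b') ∈ F ∩ edgesWithin Rᶜ from ⟨h.1, h.2, fun v hv => ?_⟩)) hr⟩
      rcases Sym2.mem_iff.1 hv with rfl | rfl
      · exact haR
      · exact hbR
    · refine Or.inr ⟨haL, y, hy, SimpleGraph.Reachable.trans (SimpleGraph.Adj.reachable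
        (show G.Adj a b' ∧ s(a, b') ∈ F ∩ edgesWithin Lᶜ from ⟨h.1, h.2, fun v hv => ?_⟩)) hr⟩
      rcases Sym2.mem_iff.1 hv with rfl | rfl
      · exact haL
      · exact hbL

lemma connVia_split {L R S : Set V} (hLR : Disjoint L R) (hc : ConnVia G F S (L ∪ R)) :
    ConnVia G (F ∩ edgesWithin Rᶜ) S L ∨ ConnVia G (F ∩ edgesWithin Lᶜ) S R := by
  obtain ⟨u, hu, b, hb, ⟨w⟩⟩ := hc
  rcases walk_split hLR w hb with ⟨-, y, hy, hr⟩ | ⟨-, y, hy, hr⟩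
  · exact Or.inl ⟨u, hu, y, hy, hr⟩
  · exact Or.inr ⟨u, hu, y, hy, hr⟩

lemma walk_support_avoids {W : Set V} {a b : V}
    (w : (openGraph G (edgesWithin Wᶜ)).Walk a b) (ha : a ∈ Wᶜ) :
    ∀ x ∈ w.support, x ∈ Wᶜ := by
  induction w with
  | nil =>
    intro x hx
    simp only [SimpleGraph.Walk.support_nil, List.mem_singleton] at hx
    exact hx ▸ ha
  | @cons a b' c h q ih =>
    intro x hx
    rw [SimpleGraph.Walk.support_cons] at hx
    rcases List.mem_cons.1 hx with rfl | hx
    · exact ha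
    · exact ih (h.2 b' (Sym2.mem_mk_right a b')) x hx

lemma edges_in_ball_finite {B : Set V} (hB : B.Finite) :
    {e : ↥G.edgeSet | ∀ x ∈ (e : Sym2 V), x ∈ B}.Finite := by
  have h1 : edgesWithin B ⊆ Set.image2 (fun x y => s(x, y)) B B := by
    intro e he
    induction e using Sym2.ind with
    | _ x y =>
      exact mem_image2.2 ⟨x, he x (Sym2.mem_mk_left x y), y, he y (Sym2.mem_mk_right x y), rfl⟩
  have h2 : (edgesWithin B).Finite := (hB.image2 _ hB).subset h1
  have h3 : {e : ↥G.edgeSet | ∀ x ∈ (e : Sym2 V), x ∈ B}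
      = Subtype.val ⁻¹' edgesWithin B := rfl
  rw [h3]
  exact Set.Finite.preimage (Subtype.val_injective.injOn) h2

lemma vertex_mem_ball_of_walk {v a x : V} {s : ℕ} (ha : a ∈ ball G {v} s)
    {b : V} (w : G.Walk a b) (hx : x ∈ w.support) : x ∈ ball G {v} (s + w.length) := by
  classical
  rw [mem_ball_single] at ha ⊢
  have hr : G.Reachable a x := (w.takeUntil x hx).reachable
  refine ⟨ha.1.trans hr, ?_⟩
  have h1 : G.dist a x ≤ w.length :=
    (SimpleGraph.dist_le _).trans (SimpleGraph.Walk.length_takeUntil_le w hx)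
  have h2 := dist_triangle' ha.1 hr
  omega

/-- The connection event as a monotone countable union of finite increasing events. -/
lemma conn_event_eq (hlf : LocFin G) (v : V) (s : ℕ) (Y T : Set V) :
    ∃ 𝒦 : ℕ → Finset (Finset ↥G.edgeSet), Monotone 𝒦 ∧
      {ω : ↥G.edgeSet → Bool | ConnVia G (openOf ω ∩ edgesWithin Y) (ball G {v} s) T}
        = ⋃ n, upEvent (𝒦 n) := by
  classical
  set J : ℕ → Finset ↥G.edgeSet := fun n =>
    (edges_in_ball_finite (G := G) (ball_finite hlf (finite_singleton v) (s + n))).toFinset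
    with hJ
  have hJmono : Monotone J := by
    intro n m hnm e he
    rw [hJ, Set.Finite.mem_toFinset] at he ⊢
    exact fun x hx => ball_mono_radius (by omega) (he x hx)
  refine ⟨fun n => (J n).powerset.filter
    (fun K => ConnVia G ((Subtype.val '' (K : Set ↥G.edgeSet)) ∩ edgesWithin Y)
      (ball G {v} s) T), ?_, ?_⟩
  · intro n m hnm K hK
    rw [Finset.mem_filter] at hK ⊢
    exact ⟨Finset.mem_powerset.2 ((Finset.mem_powerset.1 hK.1).trans (hJmono hnm)), hK.2⟩
  · ext ω
    simp only [mem_setOf_eq, mem_iUnion, upEvent, Finset.mem_filter, Finset.mem_powerset,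
      exists_prop, Finset.mem_coe]
    constructor
    · intro hc
      obtain ⟨a, ha, b, hb, w, hw⟩ := connVia_iff_exists_walk.1 hc
      refine ⟨w.length, (J w.length).filter (fun e => (e : Sym2 V) ∈ w.edges), ⟨?_, ?_⟩, ?_⟩
      · exact Finset.filter_subset _ _
      · refine connVia_iff_exists_walk.2 ⟨a, ha, b, hb, w, fun e he => ⟨?_, (hw e he).2⟩⟩
        have heG : e ∈ G.edgeSet := w.edges_subset_edgeSet he
        refine ⟨⟨e, heG⟩, ?_, rfl⟩
        rw [Finset.mem_coe, Finset.mem_filter]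
        refine ⟨?_, he⟩
        rw [hJ, Set.Finite.mem_toFinset]
        intro x hx
        refine vertex_mem_ball_of_walk ha w ?_
        induction e using Sym2.ind with
        | _ x1 y1 =>
          rcases Sym2.mem_iff.1 hx with rfl | rfl
          · exact w.fst_mem_support_of_mem_edges he
          · exact w.snd_mem_support_of_mem_edges he
      · intro e he
        rw [Finset.mem_filter] at he
        obtain ⟨hh, htrue⟩ := (hw e he.2).1
        exact htrue
    · rintro ⟨n, K, ⟨hKJ, hKc⟩, hopen⟩
      refine connVia_mono_F ?_ hKc
      rintro e ⟨he, hY⟩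
      obtain ⟨e', he', rfl⟩ := he
      exact ⟨⟨e'.2, hopen e' he'⟩, hY⟩


lemma vertex_dichotomy (hlf : LocFin G) {L R : Set V} (hLR : Disjoint L R)
    {p δ : ℝ} (hp : p ∈ Icc (0:ℝ) 1) (hδ : δ ∈ Icc (0:ℝ) 1) (v : V) (s : ℕ)
    (hmid' : ∀ μ : Measure (↥G.edgeSet → Bool), IsBernoulli p μ →
      ENNReal.ofReal (1 - δ) ≤ μ {ω | ConnVia G (openOf ω) (ball G {v} s) (L ∪ R)}) :
    (∀ μ : Measure (↥G.edgeSet → Bool), IsBernoulli p μ →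
      ENNReal.ofReal (1 - Real.sqrt δ) ≤
        μ {ω | ConnVia G (openOf ω ∩ edgesWithin Rᶜ) (ball G {v} s) L}) ∨
    (∀ μ : Measure (↥G.edgeSet → Bool), IsBernoulli p μ →
      ENNReal.ofReal (1 - Real.sqrt δ) ≤
        μ {ω | ConnVia G (openOf ω ∩ edgesWithin Lᶜ) (ball G {v} s) R}) := by
  classical
  obtain ⟨𝒦, h𝒦m, h𝒦⟩ := conn_event_eq hlf v s Rᶜ L
  obtain ⟨𝒧, h𝒧m, h𝒧⟩ := conn_event_eq hlf v s Lᶜ R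
  have hcov : ∀ μ : Measure (↥G.edgeSet → Bool), IsBernoulli p μ →
      ENNReal.ofReal (1 - δ) ≤ μ ((⋃ n, upEvent (𝒦 n)) ∪ ⋃ n, upEvent (𝒧 n)) := by
    intro μ hμ
    refine (hmid' μ hμ).trans (measure_mono ?_)
    rw [← h𝒦, ← h𝒧]
    intro ω hω
    exact connVia_split hLR hω
  rcases bern_dichotomy hp hδ 𝒦 𝒧 h𝒦m h𝒧m hcov with h | h
  · left; intro μ hμ; rw [h𝒦]; exact h μ hμ
  · right; intro μ hμ; rw [h𝒧]; exact h μ hμ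

end Graph
end Aux

end Perco

open Perco in
/-- Finding one mid-ball: if `B_r(A)` is not a vertex cutset from `L` to `R`
and every ball of radius `r-1` connects to `L ∪ R` with probability at least `1-δ`, then there
is a ball of radius `r` disjoint from `A` which connects to `L` avoiding `R`, and to `R`
avoiding `L`, each with probability at least `1-√δ`. -/
theorem statement_5 {V : Type*} (G : SimpleGraph V) (hlf : LocFin G)
    (L R : Set V) (hLR : Disjoint L R) (r : ℕ) (hr : 1 ≤ r) (A : Set V)
    (hA : ¬ VertexCutset G (ball G A r) L R)
    (p δ : ℝ) (hp : p ∈ Set.Icc (0 : ℝ) 1) (hδ : δ ∈ Set.Icc (0 : ℝ) 1)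
    (hmid : ∀ v : V, ∀ μ : MeasureTheory.Measure (↥G.edgeSet → Bool), IsBernoulli p μ →
      ENNReal.ofReal (1 - δ) ≤ μ {ω | ConnVia G (openOf ω) (ball G {v} (r - 1)) (L ∪ R)}) :
    ∃ u : V, Disjoint (ball G {u} r) A ∧
      (∀ μ : MeasureTheory.Measure (↥G.edgeSet → Bool), IsBernoulli p μ →
        ENNReal.ofReal (1 - Real.sqrt δ) ≤
          μ {ω | ConnVia G (openOf ω ∩ edgesWithin Rᶜ) (ball G {u} r) L}) ∧
      (∀ μ : MeasureTheory.Measure (↥G.edgeSet → Bool), IsBernoulli p μ →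
        ENNReal.ofReal (1 - Real.sqrt δ) ≤
          μ {ω | ConnVia G (openOf ω ∩ edgesWithin Lᶜ) (ball G {u} r) R}) := by
  classical
  set W := ball G A r with hW
  simp only [VertexCutset, not_not] at hA
  obtain ⟨a, haLW, b, hbRW, ⟨w⟩⟩ := hA
  have hsupp : ∀ x ∈ w.support, x ∈ Wᶜ := walk_support_avoids w haLW.2
  set n := w.length with hn
  -- the vertices along the path
  set g : ℕ → V := fun i => w.getVert i with hg
  have hg0 : g 0 = a := w.getVert_zero
  have hgn : g n = b := SimpleGraph.Walk.getVert_length w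
  have hgsupp : ∀ i, i ≤ n → g i ∈ w.support := fun i hi =>
    SimpleGraph.Walk.mem_support_iff_exists_getVert.2 ⟨i, rfl, hi⟩
  have hadj : ∀ i, i < n → G.Adj (g i) (g (i + 1)) := fun i hi =>
    (SimpleGraph.Walk.adj_getVert_succ w hi).1
  -- the per-vertex dichotomy
  set P : ℕ → Prop := fun i => ∀ μ : MeasureTheory.Measure (↥G.edgeSet → Bool),
    IsBernoulli p μ → ENNReal.ofReal (1 - Real.sqrt δ) ≤
      μ {ω | ConnVia G (openOf ω ∩ edgesWithin Rᶜ) (ball G {g i} (r - 1)) L} with hP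
  set Q : ℕ → Prop := fun i => ∀ μ : MeasureTheory.Measure (↥G.edgeSet → Bool),
    IsBernoulli p μ → ENNReal.ofReal (1 - Real.sqrt δ) ≤
      μ {ω | ConnVia G (openOf ω ∩ edgesWithin Lᶜ) (ball G {g i} (r - 1)) R} with hQ
  have hPQ : ∀ i, P i ∨ Q i := fun i =>
    vertex_dichotomy hlf hLR hp hδ (g i) (r - 1) (fun μ hμ => hmid (g i) μ hμ)
  have hsqrt1 : ENNReal.ofReal (1 - Real.sqrt δ) ≤ 1 :=
    ENNReal.ofReal_le_one.2 (by linarith [Real.sqrt_nonneg δ])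
  -- a trivial bound when the center is already in the target set
  have htriv : ∀ (u : V) (s : ℕ) (Y T : Set V), u ∈ T →
      ∀ μ : MeasureTheory.Measure (↥G.edgeSet → Bool), IsBernoulli p μ →
      ENNReal.ofReal (1 - Real.sqrt δ) ≤
        μ {ω | ConnVia G (openOf ω ∩ edgesWithin Y) (ball G {u} s) T} := by
    intro u s Y T hu μ hμ
    haveI := hμ.1
    have huniv : {ω : ↥G.edgeSet → Bool |
        ConnVia G (openOf ω ∩ edgesWithin Y) (ball G {u} s) T} = univ :=
      eq_univ_of_forall fun ω => connVia_of_mem (self_mem_ball u s) hu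
    rw [huniv, measure_univ]
    exact hsqrt1
  -- least index whose vertex is good for `R`
  have hex : ∃ i, i ≤ n ∧ Q i :=
    ⟨n, le_rfl, fun μ hμ => htriv (g n) (r - 1) Lᶜ R (hgn ▸ hbRW.1) μ hμ⟩
  set i₀ := Nat.find hex with hi₀
  obtain ⟨hi₀n, hQi₀⟩ := Nat.find_spec hex
  refine ⟨g i₀, ?_, ?_, ?_⟩
  · -- the ball around `g i₀` avoids `A`
    have huW : g i₀ ∈ Wᶜ := hsupp (g i₀) (hgsupp i₀ hi₀n)
    rw [Set.disjoint_left]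
    intro x hx hxA
    rw [mem_ball_single] at hx
    exact huW ⟨x, hxA, hx.1.symm, by rw [SimpleGraph.dist_comm]; exact hx.2⟩
  · -- connection to L avoiding R
    rcases Nat.eq_zero_or_pos i₀ with h0 | hpos
    · intro μ hμ
      exact htriv (g i₀) r Rᶜ L (by rw [h0, hg0]; exact haLW.1) μ hμ
    · have hklt : i₀ - 1 < i₀ := by omega
      have hnotQ : ¬ (i₀ - 1 ≤ n ∧ Q (i₀ - 1)) := Nat.find_min hex hklt
      have hPk : P (i₀ - 1) := by
        rcases hPQ (i₀ - 1) with h | h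
        · exact h
        · exact absurd ⟨by omega, h⟩ hnotQ
      have hballs : ball G {g (i₀ - 1)} (r - 1) ⊆ ball G {g i₀} r := by
        have hadj' : G.Adj (g (i₀ - 1)) (g i₀) := by
          have := hadj (i₀ - 1) (by omega)
          rwa [show i₀ - 1 + 1 = i₀ by omega] at this
        have := ball_single_subset_of_adj (s := r - 1) hadj'
        rwa [show r - 1 + 1 = r by omega] at this
      intro μ hμ
      refine (hPk μ hμ).trans (measure_mono fun ω hω => ?_)
      exact connVia_mono_left hballs hω
  · -- connection to R avoiding L
    intro μ hμ
    refine (hQi₀ μ hμ).trans (measure_mono fun ω hω => ?_)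
    exact connVia_mono_left (ball_mono_radius (by omega)) hω
end
end

section
/- Let G be an infinite graph with all vertex degrees at most d, and suppose there exists ε > 0 such that Φ(n) ≥ ε·n^{1/2} for all n ≥ 1. Then there exists δ > 0 such that for every finite set of vertices A whose induced subgraph G[A] is connected, |∂A| ≥ δ·diam(A), where diam(A) is the maximum graph distance in G between two vertices of A. -/
open MeasureTheory Set

noncomputable section

set_option maxHeartbeats 1600000
section Statement8Aux

open Finset

private lemma sqrt_ge_lin {a L W : ℝ} (ha : 0 ≤ a) (hL : 0 ≤ L) (h : (a * L) * (a * L) ≤ W) :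
    a * L ≤ Real.sqrt W := by
  have h1 : Real.sqrt ((a * L) * (a * L)) ≤ Real.sqrt W := Real.sqrt_le_sqrt h
  rwa [Real.sqrt_mul_self (by positivity)] at h1

/-- The key combinatorial lemma: if a sequence of positive "level sizes" `s` and nonnegative
"boundary counts" `b` satisfies the isoperimetric window inequalities, then the total boundary
is at least linear in the number of levels. -/
private lemma seqLemma (ε dd : ℝ) (hε : 0 < ε) (hεd : ε ≤ dd) (D : ℕ)
    (s b sl : ℕ → ℝ) (hs1 : ∀ l, l ≤ D → 1 ≤ s l) (hs0 : ∀ l, 0 ≤ s l)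
    (hb0 : ∀ l, 0 ≤ b l)
    (hsl0 : sl 0 = 0) (hsl : ∀ i, 1 ≤ i → sl i = s (i - 1)) (hsD1 : s (D + 1) = 0)
    (hcon : ∀ i j, i ≤ j → j ≤ D →
      ε * Real.sqrt (∑ l ∈ Finset.Icc i j, s l) ≤
        (∑ l ∈ Finset.Icc i j, b l) + dd * sl i + dd * s (j + 1)) :
    ε ^ 2 / (64 * dd) * ((D : ℝ) + 1) ≤ ∑ l ∈ Finset.Icc 0 D, b l := by
  have hdd : 0 < dd := lt_of_lt_of_le hε hεd
  obtain ⟨δ, hδdef⟩ : ∃ x : ℝ, x = ε ^ 2 / (64 * dd) := ⟨_, rfl⟩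
  obtain ⟨α, hαdef⟩ : ∃ x : ℝ, x = ε / (16 * dd) := ⟨_, rfl⟩
  rw [← hδdef]
  have hδpos : 0 < δ := by rw [hδdef]; positivity
  have hαpos : 0 < α := by rw [hαdef]; positivity
  have hεα : ε * α = 4 * δ := by rw [hαdef, hδdef]; field_simp; ring
  have hα2 : 4 * α ^ 2 * dd = δ := by rw [hαdef, hδdef]; field_simp; ring
  have h16 : 16 * α ≤ 1 := by
    rw [hαdef]
    rw [show (16:ℝ) * (ε / (16 * dd)) = ε / dd by field_simp]
    rw [div_le_one hdd]
    exact hεd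
  have main : ∀ k i, i ≤ D → D - i = k →
      δ * ((D : ℝ) - (i : ℝ) + 1) - dd * sl i ≤ ∑ l ∈ Finset.Icc i D, b l := by
    intro k
    induction k using Nat.strong_induction_on with
    | _ k IH =>
      intro i hiD hk
      by_cases hgood : ∃ q, i ≤ q ∧ q < D ∧
          δ * ((q : ℝ) - (i : ℝ) + 1) + dd * s q + dd * s (q + 1) ≤
            ε * Real.sqrt (∑ l ∈ Finset.Icc i q, s l)
      · obtain ⟨q, hiq, hqD, hC⟩ := hgood
        have h1 := hcon i q hiq hqD.le
        have h2 := IH (D - (q + 1)) (by omega) (q + 1) (by omega) rfl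
        rw [hsl (q + 1) (by omega), Nat.add_sub_cancel] at h2
        have hsplit : ∑ l ∈ Finset.Icc i D, b l =
            (∑ l ∈ Finset.Icc i q, b l) + ∑ l ∈ Finset.Icc (q + 1) D, b l := by
          rw [← Finset.Ico_add_one_right_eq_Icc i D,
            ← Finset.sum_Ico_consecutive b (show i ≤ q + 1 by omega) (show q + 1 ≤ D + 1 by omega),
            Finset.Ico_add_one_right_eq_Icc, Finset.Ico_add_one_right_eq_Icc]
        have hc1 : ((q + 1 : ℕ) : ℝ) = (q : ℝ) + 1 := by push_cast; ring
        rw [hc1] at h2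
        rw [hsplit]
        linarith
      · push_neg at hgood
        have claimA : ∀ t q, i ≤ q → q ≤ D → q - i = t →
            α * ((q : ℝ) - (i : ℝ) + 1) ≤ Real.sqrt (∑ l ∈ Finset.Icc i q, s l) := by
          intro t
          induction t using Nat.strong_induction_on with
          | _ t IHt =>
            intro q hiq hqD hqt
            have hiqR : (i : ℝ) ≤ (q : ℝ) := by exact_mod_cast hiq
            have hLpos : (0:ℝ) < (q : ℝ) - (i : ℝ) + 1 := by linarith
            have hcard : ((Finset.Icc i q).card : ℝ) = (q : ℝ) - (i : ℝ) + 1 := by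
              rw [Nat.card_Icc, Nat.cast_sub (by omega)]
              push_cast; ring
            have hVL : ((q : ℝ) - (i : ℝ) + 1) ≤ ∑ l ∈ Finset.Icc i q, s l := by
              rw [← hcard]
              calc ((Finset.Icc i q).card : ℝ) = ∑ _l ∈ Finset.Icc i q, (1:ℝ) := by simp
                _ ≤ ∑ l ∈ Finset.Icc i q, s l :=
                  Finset.sum_le_sum (fun l hl =>
                    hs1 l (le_trans (Finset.mem_Icc.mp hl).2 hqD))
            have hV0 : (0:ℝ) ≤ ∑ l ∈ Finset.Icc i q, s l := by linarith
            by_cases hc : α * Real.sqrt ((q : ℝ) - (i : ℝ) + 1) ≤ 1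
            · have hsq : Real.sqrt ((q:ℝ) - (i:ℝ) + 1) * Real.sqrt ((q:ℝ) - (i:ℝ) + 1)
                  = (q:ℝ) - (i:ℝ) + 1 := Real.mul_self_sqrt hLpos.le
              have h0 : 0 ≤ (1 - α * Real.sqrt ((q:ℝ) - (i:ℝ) + 1)) *
                  Real.sqrt ((q:ℝ) - (i:ℝ) + 1) :=
                mul_nonneg (by linarith) (Real.sqrt_nonneg _)
              have h1 : α * ((q:ℝ) - (i:ℝ) + 1) ≤ Real.sqrt ((q:ℝ) - (i:ℝ) + 1) := by
                nlinarith [hsq]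
              exact h1.trans (Real.sqrt_le_sqrt hVL)
            · push_neg at hc
              have hsnn := Real.sqrt_nonneg ((q:ℝ) - (i:ℝ) + 1)
              have hsq : Real.sqrt ((q:ℝ) - (i:ℝ) + 1) * Real.sqrt ((q:ℝ) - (i:ℝ) + 1)
                  = (q:ℝ) - (i:ℝ) + 1 := Real.mul_self_sqrt hLpos.le
              have hs16 : (16:ℝ) ≤ Real.sqrt ((q:ℝ) - (i:ℝ) + 1) := by
                by_contra hcon'
                push_neg at hcon'
                have : α * Real.sqrt ((q:ℝ) - (i:ℝ) + 1) < α * 16 := by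
                  exact mul_lt_mul_of_pos_left hcon' hαpos
                linarith
              have hL256 : (256:ℝ) < (q:ℝ) - (i:ℝ) + 1 := by nlinarith
              have hq2 : i + 2 ≤ q := by
                have : (i:ℝ) + 2 ≤ (q:ℝ) := by linarith
                exact_mod_cast this
              obtain ⟨r, rfl⟩ : ∃ r, q = r + 2 := ⟨q - 2, by omega⟩
              have hir : i ≤ r := by omega
              obtain ⟨L2, hL2def⟩ : ∃ x : ℝ, x = (r : ℝ) - (i : ℝ) + 1 := ⟨_, rfl⟩
              have hL2ge : (1:ℝ) ≤ L2 := by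
                have : (i:ℝ) ≤ (r:ℝ) := by exact_mod_cast hir
                rw [hL2def]; linarith
              have hcast2 : ((r + 2 : ℕ) : ℝ) = (r : ℝ) + 2 := by push_cast; ring
              have hgoalL : ((r + 2 : ℕ) : ℝ) - (i : ℝ) + 1 = L2 + 2 := by
                rw [hcast2, hL2def]; ring
              have hsum2 : ∑ l ∈ Finset.Icc i (r + 2), s l
                  = (∑ l ∈ Finset.Icc i (r + 1), s l) + s (r + 2) :=
                Finset.sum_Icc_succ_top (by omega) s
              have hsum1 : ∑ l ∈ Finset.Icc i (r + 1), s l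
                  = (∑ l ∈ Finset.Icc i r, s l) + s (r + 1) :=
                Finset.sum_Icc_succ_top (by omega) s
              have hV0r : (0:ℝ) ≤ ∑ l ∈ Finset.Icc i r, s l :=
                Finset.sum_nonneg (fun l _ => hs0 l)
              have hIH : α * L2 ≤ Real.sqrt (∑ l ∈ Finset.Icc i r, s l) := by
                have := IHt (t - 2) (by omega) r hir (by omega) (by omega)
                rw [hL2def]
                exact this
              have hb := hgood (r + 1) (by omega) (by omega)
              have hcast1 : ((r + 1 : ℕ) : ℝ) = (r : ℝ) + 1 := by push_cast; ring
              rw [hcast1] at hb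
              have hbL : (r:ℝ) + 1 - (i:ℝ) + 1 = L2 + 1 := by rw [hL2def]; ring
              rw [hbL] at hb
              -- hb : ε * √(V i (r+1)) < δ*(L2+1) + dd*s(r+1) + dd*s(r+2)
              have hmono : Real.sqrt (∑ l ∈ Finset.Icc i r, s l)
                  ≤ Real.sqrt (∑ l ∈ Finset.Icc i (r + 1), s l) := by
                apply Real.sqrt_le_sqrt
                rw [hsum1]
                linarith [hs0 (r + 1)]
              have hV2 : (α * L2) * (α * L2) ≤ ∑ l ∈ Finset.Icc i r, s l := by
                have h' := mul_self_le_mul_self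
                  (mul_nonneg hαpos.le (by linarith)) hIH
                rwa [Real.mul_self_sqrt hV0r] at h'
              have hεg : 4 * δ * L2 ≤ ε * Real.sqrt (∑ l ∈ Finset.Icc i (r + 1), s l) := by
                have h1' : ε * (α * L2) ≤ ε * Real.sqrt (∑ l ∈ Finset.Icc i (r + 1), s l) :=
                  mul_le_mul_of_nonneg_left (hIH.trans hmono) hε.le
                have h2' : ε * (α * L2) = 4 * δ * L2 := by rw [← mul_assoc, hεα]
                linarith
              have hdssum : 4 * δ * L2 - δ * (L2 + 1) ≤ dd * s (r + 1) + dd * s (r + 2) := by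
                linarith
              have hring : dd * ((α * (L2 + 2)) * (α * (L2 + 2)))
                  = dd * ((α * L2) * (α * L2)) + (4 * α ^ 2 * dd) * (L2 + 1) := by ring
              rw [hα2] at hring
              have hδmono : δ * (L2 + 1) ≤ 4 * δ * L2 - δ * (L2 + 1) := by
                nlinarith [mul_le_mul_of_nonneg_left hL2ge hδpos.le]
              have h1'' : dd * ((α * L2) * (α * L2)) ≤ dd * (∑ l ∈ Finset.Icc i r, s l) :=
                mul_le_mul_of_nonneg_left hV2 hdd.le
              have hexp : dd * ((∑ l ∈ Finset.Icc i r, s l) + s (r + 1) + s (r + 2))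
                  = dd * (∑ l ∈ Finset.Icc i r, s l) + dd * s (r + 1) + dd * s (r + 2) := by
                ring
              have hkey : dd * ((α * (L2 + 2)) * (α * (L2 + 2)))
                  ≤ dd * ((∑ l ∈ Finset.Icc i r, s l) + s (r + 1) + s (r + 2)) := by
                linarith
              have hfin : (α * (L2 + 2)) * (α * (L2 + 2))
                  ≤ (∑ l ∈ Finset.Icc i r, s l) + s (r + 1) + s (r + 2) :=
                le_of_mul_le_mul_left hkey hdd
              rw [hgoalL, hsum2, hsum1]
              exact sqrt_ge_lin hαpos.le (by linarith) hfin
        have hA := claimA (D - i) D hiD le_rfl rfl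
        have h1 := hcon i D hiD le_rfl
        rw [hsD1] at h1
        have h2 : ε * (α * ((D:ℝ) - (i:ℝ) + 1))
            ≤ ε * Real.sqrt (∑ l ∈ Finset.Icc i D, s l) :=
          mul_le_mul_of_nonneg_left hA hε.le
        have h3 : ε * (α * ((D:ℝ) - (i:ℝ) + 1)) = 4 * δ * ((D:ℝ) - (i:ℝ) + 1) := by
          rw [← mul_assoc, hεα]
        have hiDR : (i : ℝ) ≤ (D : ℝ) := by exact_mod_cast hiD
        have hL1 : (1:ℝ) ≤ (D:ℝ) - (i:ℝ) + 1 := by linarith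
        nlinarith [mul_le_mul_of_nonneg_left hL1 hδpos.le]
  have hfinal := main D 0 (Nat.zero_le D) (by omega)
  rw [hsl0] at hfinal
  have : δ * ((D:ℝ) - (0:ℕ) + 1) - dd * 0 = δ * ((D:ℝ) + 1) := by push_cast; ring
  rw [this] at hfinal
  exact hfinal

end Statement8Aux

section Statement8Graph

open Perco

variable {V : Type*}

/-- The set of edges of `G` whose second endpoint lies in a finite set `L` is finite and
has at most `d * L.card` elements, when all degrees are at most `d`. -/
private lemma intoSet_bound (G : SimpleGraph V) (d : ℕ)
    (hdeg : ∀ v : V, (G.neighborSet v).Finite ∧ (G.neighborSet v).ncard ≤ d)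
    (L : Finset V) :
    ({e : Sym2 V | ∃ x y, G.Adj x y ∧ e = s(x, y) ∧ y ∈ L}).Finite ∧
      ({e : Sym2 V | ∃ x y, G.Adj x y ∧ e = s(x, y) ∧ y ∈ L}).ncard ≤ d * L.card := by
  classical
  induction L using Finset.induction_on with
  | empty =>
    have he : ({e : Sym2 V | ∃ x y, G.Adj x y ∧ e = s(x, y) ∧ y ∈ (∅ : Finset V)}) = ∅ := by
      ext e; simp
    rw [he]
    simp
  | @insert a T ha IH =>
    have hdecomp : ({e : Sym2 V | ∃ x y, G.Adj x y ∧ e = s(x, y) ∧ y ∈ insert a T})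
        = ((fun w => s(w, a)) '' (G.neighborSet a)) ∪
          ({e : Sym2 V | ∃ x y, G.Adj x y ∧ e = s(x, y) ∧ y ∈ T}) := by
      ext e
      constructor
      · rintro ⟨x, y, hxy, rfl, hy⟩
        rcases Finset.mem_insert.mp hy with rfl | hyT
        · exact Or.inl ⟨x, hxy.symm, rfl⟩
        · exact Or.inr ⟨x, y, hxy, rfl, hyT⟩
      · rintro (⟨w, hw, rfl⟩ | ⟨x, y, hxy, rfl, hyT⟩)
        · exact ⟨w, a, (SimpleGraph.mem_neighborSet _ _ _).mp hw |>.symm, rfl,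
            Finset.mem_insert_self a T⟩
        · exact ⟨x, y, hxy, rfl, Finset.mem_insert_of_mem hyT⟩
    have himfin : ((fun w => s(w, a)) '' (G.neighborSet a)).Finite := (hdeg a).1.image _
    constructor
    · rw [hdecomp]
      exact himfin.union IH.1
    · rw [hdecomp]
      calc (((fun w => s(w, a)) '' (G.neighborSet a)) ∪
            ({e : Sym2 V | ∃ x y, G.Adj x y ∧ e = s(x, y) ∧ y ∈ T})).ncard
          ≤ ((fun w => s(w, a)) '' (G.neighborSet a)).ncard +
            ({e : Sym2 V | ∃ x y, G.Adj x y ∧ e = s(x, y) ∧ y ∈ T}).ncard :=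
            Set.ncard_union_le _ _
        _ ≤ d + d * T.card := by
            have h1 : ((fun w => s(w, a)) '' (G.neighborSet a)).ncard
                ≤ (G.neighborSet a).ncard := Set.ncard_image_le (hdeg a).1
            have h2 := (hdeg a).2
            have h3 := IH.2
            omega
        _ = d * (insert a T).card := by
            rw [Finset.card_insert_of_notMem ha]; ring

end Statement8Graph

open Perco in
/-- If an infinite graph with degrees at most `d` satisfies the isoperimetric
inequality `Φ(n) ≥ ε √n`, then there is `δ > 0` such that every finite connected vertex set `A`
satisfies `|∂A| ≥ δ diam(A)`. -/
theorem statement_8 {V : Type*} (G : SimpleGraph V) [Infinite V] (d : ℕ)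
    (hdeg : ∀ v : V, (G.neighborSet v).Finite ∧ (G.neighborSet v).ncard ≤ d)
    (ε : ℝ) (hε : 0 < ε) (hiso : ∀ n : ℕ, 1 ≤ n → ε * Real.sqrt n ≤ (phi G n : ℝ)) :
    ∃ δ : ℝ, 0 < δ ∧ ∀ A : Finset V, (G.induce (↑A : Set V)).Connected →
      δ * (setDiam G ↑A : ℝ) ≤ ((edgeBdry G ↑A).ncard : ℝ) := by
  classical
  obtain ⟨v₀⟩ : Nonempty V := inferInstance
  have hεd : ε ≤ (d : ℝ) := by
    have hmem : (edgeBdry G (↑({v₀} : Finset V) : Set V)).ncard ∈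
        {m | ∃ S : Finset V, 1 ≤ S.card ∧ (edgeBdry G ↑S).ncard = m} :=
      ⟨{v₀}, by simp, rfl⟩
    have h1 : phi G 1 ≤ (edgeBdry G (↑({v₀} : Finset V) : Set V)).ncard := Nat.sInf_le hmem
    have hsub : edgeBdry G (↑({v₀} : Finset V) : Set V)
        ⊆ (fun w => s(v₀, w)) '' (G.neighborSet v₀) := by
      rintro e ⟨x, y, hxy, rfl, hx, hy⟩
      have hxv : x = v₀ := by simpa using hx
      subst hxv
      exact ⟨y, hxy, rfl⟩
    have h2 : (edgeBdry G (↑({v₀} : Finset V) : Set V)).ncard ≤ d := by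
      calc (edgeBdry G (↑({v₀} : Finset V) : Set V)).ncard
          ≤ ((fun w => s(v₀, w)) '' (G.neighborSet v₀)).ncard :=
            Set.ncard_le_ncard hsub ((hdeg v₀).1.image _)
        _ ≤ (G.neighborSet v₀).ncard := Set.ncard_image_le (hdeg v₀).1
        _ ≤ d := (hdeg v₀).2
    have h3 := hiso 1 le_rfl
    rw [Nat.cast_one, Real.sqrt_one, mul_one] at h3
    have h12 : ((phi G 1 : ℕ) : ℝ) ≤ (d : ℝ) := by exact_mod_cast h1.trans h2
    linarith
  have hdpos : (0:ℝ) < (d : ℝ) := lt_of_lt_of_le hε hεd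
  refine ⟨ε ^ 2 / (64 * (d : ℝ)), by positivity, ?_⟩
  intro A hconn
  obtain ⟨⟨x₀, hx₀⟩⟩ := hconn.nonempty
  have hx₀A : x₀ ∈ A := by simpa using hx₀
  have hKfin : {k | ∃ u ∈ (↑A : Set V), ∃ v ∈ (↑A : Set V), G.dist u v = k}.Finite := by
    apply Set.Finite.subset (Set.Finite.image (fun p : V × V => G.dist p.1 p.2)
      (Set.Finite.prod A.finite_toSet A.finite_toSet))
    rintro k ⟨u, hu, v, hv, rfl⟩
    exact ⟨(u, v), ⟨hu, hv⟩, rfl⟩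
  have hKne : {k | ∃ u ∈ (↑A : Set V), ∃ v ∈ (↑A : Set V), G.dist u v = k}.Nonempty :=
    ⟨G.dist x₀ x₀, x₀, hx₀, x₀, hx₀, rfl⟩
  have hDmem : setDiam G (↑A : Set V) ∈
      {k | ∃ u ∈ (↑A : Set V), ∃ v ∈ (↑A : Set V), G.dist u v = k} :=
    Nat.sSup_mem hKne hKfin.bddAbove
  obtain ⟨u, huA', v, hvA', huv⟩ := hDmem
  have huA : u ∈ A := by simpa using huA'
  have hvA : v ∈ A := by simpa using hvA'
  set Dn : ℕ := setDiam G (↑A : Set V) with hDdef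
  have hub : ∀ x ∈ A, G.dist u x ≤ Dn := by
    intro x hxA
    exact le_csSup hKfin.bddAbove ⟨u, huA', x, by simpa using hxA, rfl⟩
  have hreachA : ∀ x ∈ A, G.Reachable u x := by
    intro x hxA
    obtain ⟨w⟩ := hconn.preconnected ⟨u, by simpa using huA⟩ ⟨x, by simpa using hxA⟩
    exact ⟨w.map (SimpleGraph.Embedding.induce (↑A : Set V)).toHom⟩
  have hadj_dist : ∀ {x y : V}, G.Reachable u x → G.Adj x y →
      G.dist u y ≤ G.dist u x + 1 := by
    intro x y hr hxy
    obtain ⟨w, hw⟩ := hr.exists_walk_length_eq_dist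
    have h := SimpleGraph.dist_le (w.concat hxy)
    rwa [SimpleGraph.Walk.length_concat, hw] at h
  have hlevels : ∀ l ≤ Dn, ∃ x ∈ A, G.dist u x = l := by
    have ivt : ∀ {a c : V} (p : G.Walk a c), G.Reachable u a → (∀ x ∈ p.support, x ∈ A) →
        ∀ l, G.dist u a ≤ l → l ≤ G.dist u c → ∃ x ∈ A, G.dist u x = l := by
      intro a₀ c₀ p
      induction p with
      | nil =>
        intro hra hsup l h1 h2
        exact ⟨_, hsup _ (SimpleGraph.Walk.start_mem_support _), le_antisymm h1 h2⟩
      | @cons a b c hab p ih =>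
        intro hra hsup l h1 h2
        rcases le_or_gt (G.dist u b) l with hbl | hlb
        · refine ih (hra.trans hab.reachable) ?_ l hbl h2
          intro x hx
          exact hsup x (by rw [SimpleGraph.Walk.support_cons]; exact List.mem_cons_of_mem _ hx)
        · have hd1 := hadj_dist hra hab
          have hla : l = G.dist u a := by omega
          exact ⟨a, hsup a (SimpleGraph.Walk.start_mem_support _), hla.symm⟩
    intro l hl
    obtain ⟨w0⟩ := hconn.preconnected ⟨u, by simpa using huA⟩ ⟨v, by simpa using hvA⟩
    refine ivt (w0.map (SimpleGraph.Embedding.induce (↑A : Set V)).toHom)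
      ⟨SimpleGraph.Walk.nil⟩ ?_ l ?_ ?_
    · intro x hx
      rw [SimpleGraph.Walk.support_map] at hx
      obtain ⟨⟨y, hy⟩, _, rfl⟩ := List.mem_map.mp hx
      exact Finset.mem_coe.mp hy
    · show G.dist u u ≤ l
      simp [SimpleGraph.dist_self]
    · show l ≤ G.dist u v
      exact le_trans hl (le_of_eq huv.symm)
  -- boundary edge level predicate
  set pr : ℕ → Sym2 V → Prop :=
    fun l e => ∃ x y, G.Adj x y ∧ e = s(x, y) ∧ x ∈ A ∧ y ∉ A ∧ G.dist u x = l with hpr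
  have hEAfin : (edgeBdry G (↑A : Set V)).Finite := by
    apply Set.Finite.subset (intoSet_bound G d hdeg A).1
    rintro e ⟨x, y, hxy, rfl, hx, hy⟩
    exact ⟨y, x, hxy.symm, Sym2.eq_swap.symm, by simpa using hx⟩
  -- level size hypotheses
  have hs1 : ∀ l, l ≤ Dn → (1:ℝ) ≤ ((A.filter (fun x => G.dist u x = l)).card : ℝ) := by
    intro l hl
    obtain ⟨x, hxA, hxd⟩ := hlevels l hl
    have : 0 < (A.filter (fun x => G.dist u x = l)).card :=
      Finset.card_pos.mpr ⟨x, Finset.mem_filter.mpr ⟨hxA, hxd⟩⟩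
    exact_mod_cast this
  have hs0 : ∀ l : ℕ, (0:ℝ) ≤ ((A.filter (fun x => G.dist u x = l)).card : ℝ) :=
    fun l => by positivity
  have hb0 : ∀ l : ℕ, (0:ℝ) ≤ ((hEAfin.toFinset.filter (pr l)).card : ℝ) :=
    fun l => by positivity
  have hsl0 : ((A.filter (fun z => G.dist u z + 1 = 0)).card : ℝ) = 0 := by
    rw [Finset.filter_false_of_mem (fun z _ => by omega)]
    simp
  have hslf : ∀ i, 1 ≤ i → ((A.filter (fun z => G.dist u z + 1 = i)).card : ℝ)
      = ((A.filter (fun x => G.dist u x = i - 1)).card : ℝ) := by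
    intro i hi
    norm_cast
    congr 1
    ext z
    simp only [Finset.mem_filter]
    constructor
    · rintro ⟨hz, h⟩; exact ⟨hz, by omega⟩
    · rintro ⟨hz, h⟩; exact ⟨hz, by omega⟩
  have hsD1 : ((A.filter (fun x => G.dist u x = Dn + 1)).card : ℝ) = 0 := by
    rw [Finset.filter_false_of_mem (fun x hx => by have := hub x hx; omega)]
    simp
  -- the window inequality
  have hwin : ∀ i j, i ≤ j → j ≤ Dn →
      ε * Real.sqrt (∑ l ∈ Finset.Icc i j, ((A.filter (fun x => G.dist u x = l)).card : ℝ))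
        ≤ (∑ l ∈ Finset.Icc i j, ((hEAfin.toFinset.filter (pr l)).card : ℝ))
          + (d : ℝ) * ((A.filter (fun z => G.dist u z + 1 = i)).card : ℝ)
          + (d : ℝ) * ((A.filter (fun x => G.dist u x = j + 1)).card : ℝ) := by
    intro i j hij hjD
    set UF : Finset V := A.filter (fun x => i ≤ G.dist u x ∧ G.dist u x ≤ j) with hUF
    have hUFsumN : UF.card = ∑ l ∈ Finset.Icc i j, (A.filter (fun x => G.dist u x = l)).card := by
      rw [Finset.card_eq_sum_card_fiberwise (f := fun x => G.dist u x) (t := Finset.Icc i j)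
        (fun x hx => by
          rw [hUF, Finset.mem_coe, Finset.mem_filter] at hx
          exact Finset.mem_coe.mpr (Finset.mem_Icc.mpr ⟨hx.2.1, hx.2.2⟩))]
      apply Finset.sum_congr rfl
      intro l hl
      congr 1
      ext z
      rw [hUF]
      simp only [Finset.mem_filter, Finset.mem_Icc] at hl ⊢
      constructor
      · rintro ⟨⟨hz, _, _⟩, hd⟩; exact ⟨hz, hd⟩
      · rintro ⟨hz, hd⟩
        exact ⟨⟨hz, by omega, by omega⟩, hd⟩
    obtain ⟨xi, hxiA, hxid⟩ := hlevels i (hij.trans hjD)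
    have hUFpos : 0 < UF.card := by
      apply Finset.card_pos.mpr
      refine ⟨xi, ?_⟩
      rw [hUF, Finset.mem_filter, hxid]
      exact ⟨hxiA, le_rfl, hij⟩
    have hiso1 : ε * Real.sqrt (UF.card) ≤ ((edgeBdry G (↑UF : Set V)).ncard : ℝ) := by
      have h1 := hiso UF.card hUFpos
      have h2 : phi G UF.card ≤ (edgeBdry G (↑UF : Set V)).ncard := Nat.sInf_le ⟨UF, le_rfl, rfl⟩
      have h2' : ((phi G UF.card : ℕ) : ℝ) ≤ ((edgeBdry G (↑UF : Set V)).ncard : ℝ) := by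
        exact_mod_cast h2
      linarith
    set L2f : Finset V := A.filter (fun z => G.dist u z + 1 = i) with hL2f
    set L3f : Finset V := A.filter (fun x => G.dist u x = j + 1) with hL3f
    set X1 : Finset (Sym2 V) :=
      (Finset.Icc i j).biUnion (fun l => hEAfin.toFinset.filter (pr l)) with hX1
    set S2 : Set (Sym2 V) := {e : Sym2 V | ∃ x y, G.Adj x y ∧ e = s(x, y) ∧ y ∈ L2f} with hS2
    set S3 : Set (Sym2 V) := {e : Sym2 V | ∃ x y, G.Adj x y ∧ e = s(x, y) ∧ y ∈ L3f} with hS3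
    have hsub : edgeBdry G (↑UF : Set V) ⊆ ((↑X1 : Set (Sym2 V)) ∪ S2) ∪ S3 := by
      rintro e ⟨x, y, hxy, rfl, hxU, hyU⟩
      have hxU' : x ∈ A ∧ i ≤ G.dist u x ∧ G.dist u x ≤ j := by
        have : x ∈ UF := by simpa using hxU
        rw [hUF, Finset.mem_filter] at this
        exact ⟨this.1, this.2.1, this.2.2⟩
      by_cases hyA : y ∈ A
      · have hyU' : ¬(i ≤ G.dist u y ∧ G.dist u y ≤ j) := by
          intro hcontra
          apply hyU
          have : y ∈ UF := by
            rw [hUF, Finset.mem_filter]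
            exact ⟨hyA, hcontra⟩
          simpa using this
        have r1 : G.dist u y ≤ G.dist u x + 1 := hadj_dist (hreachA x hxU'.1) hxy
        have r2 : G.dist u x ≤ G.dist u y + 1 := hadj_dist (hreachA y hyA) hxy.symm
        have hcase : G.dist u y + 1 = i ∨ G.dist u y = j + 1 := by
          rcases hxU' with ⟨-, h1, h2⟩
          omega
        rcases hcase with h | h
        · refine Or.inl (Or.inr ?_)
          rw [hS2]
          exact ⟨x, y, hxy, rfl, Finset.mem_filter.mpr ⟨hyA, h⟩⟩
        · refine Or.inr ?_
          rw [hS3]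
          exact ⟨x, y, hxy, rfl, Finset.mem_filter.mpr ⟨hyA, h⟩⟩
      · refine Or.inl (Or.inl ?_)
        rw [Finset.mem_coe, hX1, Finset.mem_biUnion]
        refine ⟨G.dist u x, Finset.mem_Icc.mpr ⟨hxU'.2.1, hxU'.2.2⟩, ?_⟩
        rw [Finset.mem_filter]
        constructor
        · rw [Set.Finite.mem_toFinset]
          exact ⟨x, y, hxy, rfl, by simpa using hxU'.1, by simpa using hyA⟩
        · rw [hpr]
          exact ⟨x, y, hxy, rfl, hxU'.1, hyA, rfl⟩
    have hX2 := intoSet_bound G d hdeg L2f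
    have hX3 := intoSet_bound G d hdeg L3f
    have hufin : (((↑X1 : Set (Sym2 V)) ∪ S2) ∪ S3).Finite :=
      ((X1.finite_toSet.union hX2.1).union hX3.1)
    have hcount1 : (edgeBdry G (↑UF : Set V)).ncard ≤ X1.card + d * L2f.card + d * L3f.card := by
      have e0 : (edgeBdry G (↑UF : Set V)).ncard ≤ (((↑X1 : Set (Sym2 V)) ∪ S2) ∪ S3).ncard :=
        Set.ncard_le_ncard hsub hufin
      have e1 : (((↑X1 : Set (Sym2 V)) ∪ S2) ∪ S3).ncard
          ≤ ((↑X1 : Set (Sym2 V)) ∪ S2).ncard + S3.ncard := Set.ncard_union_le _ _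
      have e2 : ((↑X1 : Set (Sym2 V)) ∪ S2).ncard
          ≤ (↑X1 : Set (Sym2 V)).ncard + S2.ncard := Set.ncard_union_le _ _
      have e3 : (↑X1 : Set (Sym2 V)).ncard = X1.card := Set.ncard_coe_finset _
      have e4 := hX2.2
      have e5 := hX3.2
      rw [← hS2] at e4
      rw [← hS3] at e5
      omega
    have hX1card : X1.card ≤ ∑ l ∈ Finset.Icc i j, (hEAfin.toFinset.filter (pr l)).card :=
      Finset.card_biUnion_le
    have hcount2 : ((edgeBdry G (↑UF : Set V)).ncard : ℝ)
        ≤ (∑ l ∈ Finset.Icc i j, ((hEAfin.toFinset.filter (pr l)).card : ℝ))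
          + (d : ℝ) * (L2f.card : ℝ) + (d : ℝ) * (L3f.card : ℝ) := by
      have : (edgeBdry G (↑UF : Set V)).ncard
          ≤ (∑ l ∈ Finset.Icc i j, (hEAfin.toFinset.filter (pr l)).card)
            + d * L2f.card + d * L3f.card := by omega
      exact_mod_cast this
    have hUFsumR : ((UF.card : ℕ) : ℝ)
        = ∑ l ∈ Finset.Icc i j, ((A.filter (fun x => G.dist u x = l)).card : ℝ) := by
      rw [hUFsumN]
      push_cast
      rfl
    rw [← hUFsumR]
    calc ε * Real.sqrt (UF.card) ≤ ((edgeBdry G (↑UF : Set V)).ncard : ℝ) := hiso1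
      _ ≤ _ := hcount2
  -- apply the sequence lemma
  have hseq := seqLemma ε (d : ℝ) hε hεd Dn
    (fun l => ((A.filter (fun x => G.dist u x = l)).card : ℝ))
    (fun l => ((hEAfin.toFinset.filter (pr l)).card : ℝ))
    (fun i => ((A.filter (fun z => G.dist u z + 1 = i)).card : ℝ))
    hs1 hs0 hb0 hsl0 hslf hsD1 hwin
  -- total boundary count
  have hdisj : ∀ l ∈ Finset.Icc 0 Dn, ∀ l' ∈ Finset.Icc 0 Dn, l ≠ l' →
      Disjoint (hEAfin.toFinset.filter (pr l)) (hEAfin.toFinset.filter (pr l')) := by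
    intro l _ l' _ hne
    rw [Finset.disjoint_left]
    rintro e he he'
    rw [Finset.mem_filter, hpr] at he he'
    obtain ⟨-, x, y, hxy, hexy, hxA, hyA, hdx⟩ := he
    obtain ⟨-, x', y', hxy', hexy', hxA', hyA', hdx'⟩ := he'
    rw [hexy] at hexy'
    rcases Sym2.eq_iff.mp hexy' with ⟨h1, h2⟩ | ⟨h1, h2⟩
    · exact hne (by rw [← hdx, ← hdx', h1])
    · exact hyA' (h1 ▸ hxA)
  have htotN : ∑ l ∈ Finset.Icc 0 Dn, (hEAfin.toFinset.filter (pr l)).card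
      ≤ (edgeBdry G (↑A : Set V)).ncard := by
    rw [← Finset.card_biUnion hdisj]
    rw [Set.ncard_eq_toFinset_card _ hEAfin]
    apply Finset.card_le_card
    intro e he
    rw [Finset.mem_biUnion] at he
    obtain ⟨l, -, he⟩ := he
    exact (Finset.mem_filter.mp he).1
  have htot : (∑ l ∈ Finset.Icc 0 Dn, ((hEAfin.toFinset.filter (pr l)).card : ℝ))
      ≤ ((edgeBdry G (↑A : Set V)).ncard : ℝ) := by
    have := htotN
    push_cast
    exact_mod_cast this
  calc ε ^ 2 / (64 * (d : ℝ)) * (Dn : ℝ)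
      ≤ ε ^ 2 / (64 * (d : ℝ)) * ((Dn : ℝ) + 1) := by
        apply mul_le_mul_of_nonneg_left (by linarith) (by positivity)
    _ ≤ ∑ l ∈ Finset.Icc 0 Dn, ((hEAfin.toFinset.filter (pr l)).card : ℝ) := hseq
    _ ≤ ((edgeBdry G (↑A : Set V)).ncard : ℝ) := htot
end
end

section
/- Let m be a non-negative integer and let r : {0,…,m} → ℕ be any function. For k ∈ {0,…,m}, set I_k := [k - r(k) - 1/2, k + r(k) + 1/2] ⊆ ℝ. Then there exists a subset L ⊆ {0,…,m} such that the intervals I_k for k ∈ L are pairwise disjoint and Σ_{k ∈ L} (2·r(k) + 1) ≥ m/2. -/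
open MeasureTheory Set

noncomputable section

lemma icc_disj_aux {a b c d : ℝ} (h : b < c) :
    Disjoint (Set.Icc a b) (Set.Icc c d) := by
  rw [Set.disjoint_left]
  rintro x ⟨_, hx⟩ ⟨hx', _⟩
  linarith

lemma statement_15_aux (m : ℕ) (r : ℕ → ℕ) : ∀ t : ℕ, t ≤ m →
    ∃ A B : Finset ℕ, A ⊆ Finset.range (m + 1) ∧ B ⊆ Finset.range (m + 1) ∧
      (↑A : Set ℕ).Pairwise (fun j k =>
        Disjoint (Set.Icc ((j : ℝ) - r j - 1/2) ((j : ℝ) + r j + 1/2))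
          (Set.Icc ((k : ℝ) - r k - 1/2) ((k : ℝ) + r k + 1/2))) ∧
      (↑B : Set ℕ).Pairwise (fun j k =>
        Disjoint (Set.Icc ((j : ℝ) - r j - 1/2) ((j : ℝ) + r j + 1/2))
          (Set.Icc ((k : ℝ) - r k - 1/2) ((k : ℝ) + r k + 1/2))) ∧
      (∀ j ∈ B, (j : ℤ) + r j + 1 ≤ t) ∧
      (∀ j ∈ A, (j : ℤ) - r j ≤ t) ∧
      ((t : ℝ) + 1) ≤ (∑ j ∈ A, (2 * (r j : ℝ) + 1)) + (∑ j ∈ B, (2 * (r j : ℝ) + 1)) := by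
  intro t
  induction t using Nat.strong_induction_on with
  | _ t ih =>
    intro ht
    -- the set of indices whose interval covers t
    set S : Finset ℕ := (Finset.range (m + 1)).filter
      (fun i => (i : ℤ) - r i ≤ t ∧ (t : ℤ) ≤ i + r i) with hS
    have htS : t ∈ S := by
      simp only [hS, Finset.mem_filter, Finset.mem_range]
      refine ⟨by omega, by omega, by omega⟩
    obtain ⟨k, hkS, hkmin⟩ := Finset.exists_min_image S (fun i => (i : ℤ) - r i) ⟨t, htS⟩
    have hkprop : k < m + 1 ∧ (k : ℤ) - r k ≤ t ∧ (t : ℤ) ≤ k + r k := by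
      simpa [hS, Finset.mem_filter, Finset.mem_range] using hkS
    by_cases hbase : k ≤ r k
    · -- base case: interval reaches past 0
      refine ⟨{k}, ∅, ?_, by simp, by rw [Finset.coe_singleton]; exact Set.pairwise_singleton _ _, by simp, by simp, ?_, ?_⟩
      · intro x hx
        simp only [Finset.mem_singleton] at hx
        subst hx
        exact Finset.mem_range.mpr hkprop.1
      · intro j hj
        simp only [Finset.mem_singleton] at hj
        subst hj
        exact hkprop.2.1
      · have h1 : (t : ℤ) ≤ k + r k := hkprop.2.2
        have h2 : (k : ℤ) ≤ r k := by exact_mod_cast hbase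
        simp only [Finset.sum_singleton, Finset.sum_empty]
        have : (t : ℝ) ≤ (k : ℝ) + r k := by exact_mod_cast h1
        have : (k : ℝ) ≤ r k := by exact_mod_cast h2
        linarith
    · -- recursive case
      push_neg at hbase
      set t' : ℕ := k - (r k + 1) with ht'
      have ht'cast : (t' : ℤ) = (k : ℤ) - r k - 1 := by
        have : r k + 1 ≤ k := hbase
        push_cast [ht', Nat.cast_sub this]
        ring
      have ht'lt : t' < t := by omega
      have ht'le : t' ≤ m := by omega
      obtain ⟨A', B', hA's, hB's, hA'p, hB'p, hB'c, hA'c, hsum'⟩ := ih t' ht'lt ht'le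
      have hknB' : k ∉ B' := by
        intro hk
        have := hB'c k hk
        omega
      refine ⟨insert k B', A', ?_, hA's, ?_, hA'p, ?_, ?_, ?_⟩
      · intro x hx
        rcases Finset.mem_insert.mp hx with h | h
        · subst h; exact Finset.mem_range.mpr hkprop.1
        · exact hB's h
      · -- pairwise disjointness of insert k B'
        rw [Finset.coe_insert]
        rw [@Set.pairwise_insert_of_symm _ _ _ _ ⟨fun a b hab => hab.symm⟩]
        refine ⟨hB'p, ?_⟩
        intro j hj _
        have hj' : (j : ℤ) + r j + 1 ≤ t' := hB'c j hj
        have h3 : (j : ℝ) + r j + 1 ≤ (k : ℝ) - r k - 1 := by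
          have : (j : ℤ) + r j + 1 ≤ (k : ℤ) - r k - 1 := by omega
          exact_mod_cast this
        exact (icc_disj_aux (by linarith : (j:ℝ) + r j + 1/2 < (k:ℝ) - r k - 1/2)).symm
      · -- new B = A' condition
        intro j hj
        by_contra hcon
        push_neg at hcon
        have hjc : (j : ℤ) - r j ≤ t' := hA'c j hj
        have hjm : j < m + 1 := Finset.mem_range.mp (hA's hj)
        have hjS : j ∈ S := by
          simp only [hS, Finset.mem_filter, Finset.mem_range]
          exact ⟨hjm, by omega, by omega⟩
        have := hkmin j hjS
        omega
      · -- new A condition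
        intro j hj
        rcases Finset.mem_insert.mp hj with h | h
        · subst h; exact hkprop.2.1
        · have := hB'c j h
          omega
      · -- sum bound
        rw [Finset.sum_insert hknB']
        have h1 : (t : ℤ) ≤ k + r k := hkprop.2.2
        have h1' : (t : ℝ) ≤ (k : ℝ) + r k := by exact_mod_cast h1
        have h2 : (t' : ℝ) = (k : ℝ) - r k - 1 := by exact_mod_cast ht'cast
        linarith

/-- A Vitali-type covering selection: from the intervals
`I_k = [k - r k - 1/2, k + r k + 1/2]`, `k ∈ {0,…,m}`, one can select a pairwise disjoint
subfamily whose total length is at least `m/2`. -/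
theorem statement_15 (m : ℕ) (r : ℕ → ℕ) :
    ∃ L : Finset ℕ, L ⊆ Finset.range (m + 1) ∧
      (↑L : Set ℕ).Pairwise (fun j k =>
        Disjoint (Set.Icc ((j : ℝ) - r j - 1/2) ((j : ℝ) + r j + 1/2))
          (Set.Icc ((k : ℝ) - r k - 1/2) ((k : ℝ) + r k + 1/2))) ∧
      (m : ℝ) / 2 ≤ ∑ k ∈ L, (2 * (r k : ℝ) + 1) := by
  obtain ⟨A, B, hAs, hBs, hAp, hBp, _, _, hsum⟩ := statement_15_aux m r m le_rfl
  by_cases h : (m : ℝ) / 2 ≤ ∑ j ∈ A, (2 * (r j : ℝ) + 1)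
  · exact ⟨A, hAs, hAp, h⟩
  · refine ⟨B, hBs, hBp, ?_⟩
    push_neg at h
    linarith
end
end
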